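/- arXiv:1809.06523 — 12 statements merged into one kernel-verified Lean document; each statement's English description precedes it below -/
import Mathlib

section
/- Let X be a finite set, let φ : 𝒫(X) → ℝ be any real-valued function, and define λ_A = ∑_{B : A ⊆ B ⊆ X} (−1)^{|A|+|B|+1} φ(B) for each A ⊆ X. Then for every vector x ∈ ℝ^{𝒫(X)} one has ∑_{A⊆X} ∑_{B⊆X} x_A x_B φ(A ∪ B) = −∑_{C⊆X} λ_C (∑_{A ⊆ C} x_A)². -/
open Finset

lemma altR {X : Type*} [DecidableEq X] (t : Finset X) :
    ∑ S ∈ t.powerset, (-1:ℝ)^S.card = if t = ∅ then 1 else 0 := by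
  have := Finset.sum_powerset_neg_one_pow_card (x := t)
  have h2 : ((∑ m ∈ t.powerset, (-1 : ℤ) ^ m.card : ℤ) : ℝ)
      = ∑ S ∈ t.powerset, (-1:ℝ)^S.card := by push_cast; rfl
  rw [← h2, this]
  split <;> norm_num

lemma alt {X : Type*} [DecidableEq X] (D B : Finset X) :
    ∑ C ∈ B.powerset.filter (fun C => D ⊆ C), (-1:ℝ)^C.card
      = if B = D then (-1:ℝ)^D.card else 0 := by
  by_cases h : D ⊆ B
  · have h1 : ∑ C ∈ B.powerset.filter (fun C => D ⊆ C), (-1:ℝ)^C.card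
        = ∑ S ∈ (B \ D).powerset, (-1:ℝ)^(D.card + S.card) := by
      refine Finset.sum_nbij' (fun C => C \ D) (fun S => D ∪ S) ?_ ?_ ?_ ?_ ?_
      · intro C hC
        simp only [mem_filter, mem_powerset] at hC ⊢
        exact sdiff_subset_sdiff hC.1 le_rfl
      · intro S hS
        simp only [mem_powerset, mem_filter] at hS ⊢
        exact ⟨union_subset h (hS.trans (sdiff_subset)), subset_union_left⟩
      · intro C hC
        simp only [mem_filter, mem_powerset] at hC
        exact union_sdiff_of_subset hC.2
      · intro S hS
        simp only [mem_powerset] at hS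
        exact union_sdiff_cancel_left (disjoint_sdiff.mono_right hS)
      · intro C hC
        simp only [mem_filter, mem_powerset] at hC
        rw [← card_sdiff_add_card_eq_card hC.2, add_comm]
    rw [h1]
    simp_rw [pow_add]
    rw [← Finset.mul_sum, altR]
    by_cases hBD : B = D
    · simp [hBD]
    · have : B \ D ≠ ∅ := fun he =>
        hBD (subset_antisymm (sdiff_eq_empty_iff_subset.mp he) h)
      simp [hBD, this]
  · have h1 : B.powerset.filter (fun C => D ⊆ C) = ∅ := by
      refine filter_eq_empty_iff.mpr ?_
      intro C hC hDC
      exact h (hDC.trans (mem_powerset.mp hC))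
    have h2 : B ≠ D := fun hb => h (hb ▸ le_rfl)
    simp [h1, h2]

lemma key {X : Type*} [Fintype X] [DecidableEq X] (φ : Finset X → ℝ)
    (lam : Finset X → ℝ)
    (hlam : ∀ A : Finset X,
      lam A = ∑ B ∈ Finset.univ.filter (fun B => A ⊆ B),
        (-1 : ℝ) ^ (A.card + B.card + 1) * φ B) (D : Finset X) :
    ∑ C : Finset X, (if D ⊆ C then lam C else 0) = -φ D := by
  have step : ∀ C : Finset X, (if D ⊆ C then lam C else 0)
      = ∑ B : Finset X, (if D ⊆ C ∧ C ⊆ B then (-1:ℝ)^C.card * ((-1:ℝ)^(B.card + 1) * φ B) else 0) := by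
    intro C
    by_cases h : D ⊆ C
    · simp only [h, true_and, if_true, hlam C, sum_filter]
      congr 1; ext B
      by_cases hcb : C ⊆ B
      · simp only [hcb, if_true, pow_add, pow_succ]; ring
      · simp [hcb]
    · simp [h]
  simp_rw [step]
  rw [Finset.sum_comm]
  have inner : ∀ B : Finset X,
      (∑ C : Finset X, if D ⊆ C ∧ C ⊆ B then (-1:ℝ)^C.card * ((-1:ℝ)^(B.card + 1) * φ B) else 0)
      = (if B = D then (-1:ℝ)^D.card else 0) * ((-1:ℝ)^(B.card + 1) * φ B) := by
    intro B
    rw [← alt D B, Finset.sum_mul]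
    have hset : Finset.univ.filter (fun C => D ⊆ C ∧ C ⊆ B)
        = B.powerset.filter (fun C => D ⊆ C) := by
      ext C; simp [and_comm]
    rw [← Finset.sum_filter, hset]
  simp_rw [inner]
  rw [Finset.sum_eq_single D]
  · rw [if_pos rfl, ← mul_assoc, ← pow_add,
      Odd.neg_one_pow ⟨D.card, by ring⟩, neg_one_mul]
  · intro b _ hb; simp [hb]
  · intro h; exact absurd (mem_univ D) h

/-- For a finite set `X`, a function `φ : 𝒫(X) → ℝ`, and
`λ_A = ∑_{B : A ⊆ B} (-1)^{|A|+|B|+1} φ(B)`, for every `x ∈ ℝ^{𝒫(X)}` we have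
`∑_A ∑_B x_A x_B φ(A ∪ B) = - ∑_C λ_C (∑_{A ⊆ C} x_A)²`. -/
theorem stmt0 {X : Type*} [Fintype X] [DecidableEq X] (φ : Finset X → ℝ)
    (lam : Finset X → ℝ)
    (hlam : ∀ A : Finset X,
      lam A = ∑ B ∈ Finset.univ.filter (fun B => A ⊆ B),
        (-1 : ℝ) ^ (A.card + B.card + 1) * φ B)
    (x : Finset X → ℝ) :
    ∑ A : Finset X, ∑ B : Finset X, x A * x B * φ (A ∪ B)
      = - ∑ C : Finset X, lam C * (∑ A ∈ C.powerset, x A) ^ 2 := by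
  have expand : ∀ C : Finset X, lam C * (∑ A ∈ C.powerset, x A) ^ 2
      = ∑ A : Finset X, ∑ B : Finset X,
        x A * x B * (if A ∪ B ⊆ C then lam C else 0) := by
    intro C
    rw [sq, Finset.sum_mul_sum]
    rw [Finset.mul_sum]
    rw [show C.powerset = Finset.univ.filter (fun A => A ⊆ C) from by ext A; simp]
    rw [Finset.sum_filter]
    congr 1; ext A
    rw [Finset.mul_sum, Finset.sum_filter]
    by_cases hA : A ⊆ C
    · simp only [hA, if_true]
      congr 1; ext B
      by_cases hB : B ⊆ C
      · simp only [hB, if_true, union_subset hA hB]; ring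
      · have : ¬ A ∪ B ⊆ C := fun hh => hB ((subset_union_right).trans hh)
        simp [hB, this]
    · have : ∀ B : Finset X, ¬ A ∪ B ⊆ C := fun B hh => hA ((subset_union_left).trans hh)
      simp [hA, this]
  simp_rw [expand]
  have swap : (∑ C : Finset X, ∑ A : Finset X, ∑ B : Finset X,
        x A * x B * (if A ∪ B ⊆ C then lam C else 0))
      = ∑ A : Finset X, ∑ B : Finset X, ∑ C : Finset X,
        x A * x B * (if A ∪ B ⊆ C then lam C else 0) := by
    rw [Finset.sum_comm]
    exact Finset.sum_congr rfl fun A _ => Finset.sum_comm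
  rw [swap, ← Finset.sum_neg_distrib]
  refine Finset.sum_congr rfl fun A _ => ?_
  rw [← Finset.sum_neg_distrib]
  refine Finset.sum_congr rfl fun B _ => ?_
  rw [← Finset.mul_sum, key φ lam hlam (A ∪ B)]
  ring
end

section
/- Let X be a finite set and let δ : 𝒫(X) → ℝ satisfy δ(A) = 0 whenever |A| ≤ 1. Then δ is of negative type if and only if λ_A ≥ 0 for every A ⊆ X with A ≠ ∅ and A ≠ X. -/
open Finset

private lemma alt_powerset {X : Type*} [DecidableEq X] (s : Finset X) :
    ∑ t ∈ s.powerset, (-1 : ℝ) ^ t.card = if s = ∅ then 1 else 0 := by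
  have := Finset.sum_powerset_neg_one_pow_card (x := s)
  calc ∑ t ∈ s.powerset, (-1 : ℝ) ^ t.card
      = ((∑ t ∈ s.powerset, (-1 : ℤ) ^ t.card : ℤ) : ℝ) := by push_cast; rfl
    _ = if s = ∅ then 1 else 0 := by rw [this]; split <;> norm_num

private lemma alt_Icc {X : Type*} [DecidableEq X] (S B : Finset X) (h : S ⊆ B) :
    ∑ C ∈ Finset.Icc S B, (-1 : ℝ) ^ C.card
      = (-1) ^ S.card * (if S = B then 1 else 0) := by
  have hbij : ∑ C ∈ Finset.Icc S B, (-1 : ℝ) ^ C.card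
      = ∑ T ∈ (B \ S).powerset, (-1 : ℝ) ^ (S.card + T.card) := by
    refine Finset.sum_nbij' (fun C => C \ S) (fun T => S ∪ T) ?_ ?_ ?_ ?_ ?_
    · intro C hC
      rw [Finset.mem_Icc] at hC
      exact Finset.mem_powerset.2 (Finset.sdiff_subset_sdiff hC.2 le_rfl)
    · intro T hT
      rw [Finset.mem_powerset] at hT
      rw [Finset.mem_Icc]
      exact ⟨Finset.subset_union_left, Finset.union_subset h (hT.trans Finset.sdiff_subset)⟩
    · intro C hC
      rw [Finset.mem_Icc] at hC
      exact Finset.union_sdiff_of_subset hC.1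
    · intro T hT
      rw [Finset.mem_powerset] at hT
      have hd : Disjoint S T :=
        Finset.disjoint_right.2 fun a ha => (Finset.mem_sdiff.1 (hT ha)).2
      exact Finset.union_sdiff_cancel_left hd
    · intro C hC
      rw [Finset.mem_Icc] at hC
      have hle := Finset.card_le_card hC.1
      congr 1
      rw [Finset.card_sdiff_of_subset hC.1]
      omega
  rw [hbij]
  simp_rw [pow_add]
  rw [← Finset.mul_sum, alt_powerset]
  congr 1
  by_cases hSB : S = B
  · subst hSB; simp
  · have hne : B \ S ≠ ∅ := fun e =>
      hSB (Finset.Subset.antisymm h (Finset.sdiff_eq_empty_iff_subset.1 e))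
    simp [hne, hSB]

private lemma inv_lemma {X : Type*} [Fintype X] [DecidableEq X] (δ : Finset X → ℝ)
    (S : Finset X) :
    ∑ C ∈ univ.filter (fun C => S ⊆ C),
        (∑ B ∈ univ.filter (fun B => C ⊆ B), (-1 : ℝ) ^ (C.card + B.card + 1) * δ B)
      = -δ S := by
  rw [Finset.sum_comm' (t' := univ.filter (fun B => S ⊆ B)) (s' := fun B => Finset.Icc S B)
    (fun C B => by
      simp only [Finset.mem_filter, Finset.mem_univ, true_and, Finset.mem_Icc]
      constructor
      · rintro ⟨h1, h2⟩; exact ⟨⟨h1, h2⟩, h1.trans h2⟩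
      · rintro ⟨⟨h1, h2⟩, _⟩; exact ⟨h1, h2⟩)]
  have hstep : ∀ B ∈ univ.filter (fun B => S ⊆ B),
      (∑ C ∈ Finset.Icc S B, (-1 : ℝ) ^ (C.card + B.card + 1) * δ B)
        = if S = B then -δ S else 0 := by
    intro B hB
    rw [Finset.mem_filter] at hB
    simp_rw [pow_add, pow_succ, ← Finset.sum_mul]
    rw [alt_Icc S B hB.2]
    by_cases hSB : S = B
    · subst hSB
      have h1 : ((-1 : ℝ) ^ S.card) * (-1) ^ S.card = 1 := by
        rw [← pow_add]; exact Even.neg_one_pow ⟨S.card, rfl⟩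
      simp only [if_pos rfl, if_true, pow_zero, one_mul, mul_one]
      linear_combination (-δ S) * h1
    · simp [hSB]
  rw [Finset.sum_congr rfl hstep, Finset.sum_eq_single_of_mem S (by simp)]
  · simp
  · intro b _ hb
    exact if_neg fun e => hb e.symm

private lemma key_s1 {X : Type*} [Fintype X] [DecidableEq X] (δ : Finset X → ℝ)
    (x : Finset X → ℝ) :
    ∑ A : Finset X, ∑ B : Finset X, x A * x B * δ (A ∪ B)
      = -∑ C : Finset X,
          (∑ B ∈ univ.filter (fun B => C ⊆ B), (-1 : ℝ) ^ (C.card + B.card + 1) * δ B)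
            * (∑ A ∈ C.powerset, x A) ^ 2 := by
  set L : Finset X → ℝ :=
    fun C => ∑ B ∈ univ.filter (fun B => C ⊆ B), (-1 : ℝ) ^ (C.card + B.card + 1) * δ B
    with hL
  have hδeq : ∀ S : Finset X, δ S = -∑ C : Finset X, if S ⊆ C then L C else 0 := by
    intro S
    rw [← Finset.sum_filter, inv_lemma δ S, neg_neg]
  have hy : ∀ C : Finset X, (∑ A ∈ C.powerset, x A)
      = ∑ A : Finset X, if A ⊆ C then x A else 0 := by
    intro C
    rw [← Finset.sum_filter]
    apply Finset.sum_congr _ (fun _ _ => rfl)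
    ext A
    simp [Finset.mem_powerset]
  have e1 : ∀ A B : Finset X, x A * x B * δ (A ∪ B)
      = -∑ C : Finset X, (if A ⊆ C ∧ B ⊆ C then x A * x B * L C else 0) := by
    intro A B
    rw [hδeq (A ∪ B), mul_neg, Finset.mul_sum]
    congr 1
    refine Finset.sum_congr rfl fun C _ => ?_
    by_cases hc : A ∪ B ⊆ C
    · rw [if_pos hc, if_pos (Finset.union_subset_iff.1 hc)]
    · rw [if_neg hc, if_neg (fun hc2 => hc (Finset.union_subset_iff.2 hc2)), mul_zero]
  calc ∑ A : Finset X, ∑ B : Finset X, x A * x B * δ (A ∪ B)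
      = ∑ A : Finset X, ∑ B : Finset X,
          -∑ C : Finset X, (if A ⊆ C ∧ B ⊆ C then x A * x B * L C else 0) :=
        Finset.sum_congr rfl fun A _ => Finset.sum_congr rfl fun B _ => e1 A B
    _ = -∑ A : Finset X, ∑ B : Finset X,
          ∑ C : Finset X, (if A ⊆ C ∧ B ⊆ C then x A * x B * L C else 0) := by
        simp only [Finset.sum_neg_distrib]
    _ = -∑ C : Finset X, ∑ A : Finset X,
          ∑ B : Finset X, (if A ⊆ C ∧ B ⊆ C then x A * x B * L C else 0) := by
        congr 1
        calc ∑ A : Finset X, ∑ B : Finset X,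
              ∑ C : Finset X, (if A ⊆ C ∧ B ⊆ C then x A * x B * L C else 0)
            = ∑ A : Finset X, ∑ C : Finset X,
              ∑ B : Finset X, (if A ⊆ C ∧ B ⊆ C then x A * x B * L C else 0) :=
              Finset.sum_congr rfl fun A _ => Finset.sum_comm
          _ = ∑ C : Finset X, ∑ A : Finset X,
              ∑ B : Finset X, (if A ⊆ C ∧ B ⊆ C then x A * x B * L C else 0) :=
              Finset.sum_comm
    _ = -∑ C : Finset X, L C * (∑ A ∈ C.powerset, x A) ^ 2 := by
        congr 1
        refine Finset.sum_congr rfl fun C _ => ?_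
        rw [hy C, sq, Finset.sum_mul_sum, Finset.mul_sum]
        refine Finset.sum_congr rfl fun A _ => ?_
        rw [Finset.mul_sum]
        refine Finset.sum_congr rfl fun B _ => ?_
        by_cases h1 : A ⊆ C <;> by_cases h2 : B ⊆ C <;> simp [h1, h2] <;> ring

/-- Let `X` be finite and `δ : 𝒫(X) → ℝ` with `δ(A) = 0` whenever `|A| ≤ 1`.
Then `δ` is of negative type iff `λ_A ≥ 0` for every `A ≠ ∅, X`, where
`λ_A = ∑_{B : A ⊆ B} (-1)^{|A|+|B|+1} δ(B)`. -/
theorem stmt1 {X : Type*} [Fintype X] [DecidableEq X] (δ : Finset X → ℝ)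
    (hδ : ∀ A : Finset X, A.card ≤ 1 → δ A = 0) :
    (∀ x : Finset X → ℝ, x ∅ = 0 → (∑ A : Finset X, x A) = 0 →
        ∑ A : Finset X, ∑ B : Finset X, x A * x B * δ (A ∪ B) ≤ 0)
      ↔ (∀ A : Finset X, A ≠ ∅ → A ≠ Finset.univ →
          0 ≤ ∑ B ∈ Finset.univ.filter (fun B => A ⊆ B),
            (-1 : ℝ) ^ (A.card + B.card + 1) * δ B) := by
  set L : Finset X → ℝ :=
    fun C => ∑ B ∈ univ.filter (fun B => C ⊆ B), (-1 : ℝ) ^ (C.card + B.card + 1) * δ B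
    with hL
  constructor
  · intro h A hA hAu
    set x : Finset X → ℝ := fun S => if A ⊆ S then (-1 : ℝ) ^ (S.card + A.card) else 0 with hx
    have hy : ∀ C : Finset X, (∑ S ∈ C.powerset, x S) = if C = A then 1 else 0 := by
      intro C
      by_cases hAC : A ⊆ C
      · have hfil : C.powerset.filter (fun S => A ⊆ S) = Finset.Icc A C := by
          ext S; simp [Finset.mem_powerset, Finset.mem_Icc, and_comm]
        rw [hx]
        rw [← Finset.sum_filter, hfil]
        simp_rw [pow_add]
        rw [← Finset.sum_mul, alt_Icc A C hAC]
        by_cases hCA : A = C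
        · subst hCA
          simp only [if_pos rfl, if_true, mul_one]
          rw [← pow_add]
          exact Even.neg_one_pow ⟨A.card, rfl⟩
        · have hne : ¬ C = A := by intro e; exact hCA e.symm
          simp [hCA, hne]
      · have hz : ∀ S ∈ C.powerset, x S = 0 := by
          intro S hS
          rw [Finset.mem_powerset] at hS
          have : ¬ A ⊆ S := fun hAS => hAC (hAS.trans hS)
          simp [hx, this]
        rw [Finset.sum_eq_zero hz]
        have hne : ¬ C = A := by intro e; exact hAC (le_of_eq e.symm)
        simp [hne]
    have hx0 : x ∅ = 0 := by
      have : ¬ A ⊆ ∅ := fun hs => hA (Finset.subset_empty.1 hs)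
      simp [hx, this]
    have hsum : (∑ S : Finset X, x S) = 0 := by
      have hu := hy Finset.univ
      rw [Finset.powerset_univ] at hu
      rw [hu, if_neg (Ne.symm hAu)]
    have h2 := h x hx0 hsum
    rw [key_s1 δ x] at h2
    simp_rw [hy] at h2
    have hs : ∑ C : Finset X, L C * (if C = A then (1:ℝ) else 0) ^ 2 = L A := by
      rw [Finset.sum_congr rfl (fun C _ => by
        show L C * (if C = A then (1:ℝ) else 0) ^ 2 = if C = A then L C else 0
        split <;> ring)]
      simp
    rw [hs] at h2
    linarith
  · intro h x hx0 hxsum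
    rw [key_s1 δ x]
    have hnn : 0 ≤ ∑ C : Finset X, L C * (∑ A ∈ C.powerset, x A) ^ 2 := by
      apply Finset.sum_nonneg
      intro C _
      by_cases hC0 : C = ∅
      · subst hC0; simp [hx0]
      by_cases hCu : C = Finset.univ
      · subst hCu
        rw [Finset.powerset_univ, hxsum]
        simp
      · exact mul_nonneg (h C hC0 hCu) (sq_nonneg _)
    linarith
end

section
/- Let X be a finite set and let δ : 𝒫(X) → ℝ satisfy δ(A) = 0 whenever |A| ≤ 1. If λ_A ≥ 0 for every A ⊆ X with A ≠ ∅ and A ≠ X, then δ is monotone (A ⊆ B implies δ(A) ≤ δ(B)) and for all A, B ⊆ X and every c ∈ X one has δ(A ∪ {c}) + δ(B ∪ {c}) ≥ δ(A ∪ B ∪ {c}); consequently δ(A ∪ B) + δ(B ∪ C) ≥ δ(A ∪ C) whenever B ≠ ∅. -/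
open Finset

section aux
variable {X : Type*} [Fintype X] [DecidableEq X]

lemma alt_sum (A C : Finset X) (hAC : A ⊆ C) :
    ∑ B ∈ univ.filter (fun B => A ⊆ B ∧ B ⊆ C), (-1:ℝ)^B.card
      = if A = C then (-1:ℝ)^A.card else 0 := by
  have h1 : ∑ B ∈ univ.filter (fun B => A ⊆ B ∧ B ⊆ C), (-1:ℝ)^B.card
      = ∑ D ∈ (C \ A).powerset, (-1:ℝ)^(A.card + D.card) := by
    refine Finset.sum_nbij' (fun B => B \ A) (fun D => A ∪ D) ?_ ?_ ?_ ?_ ?_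
    · intro B hB
      simp only [mem_filter, mem_univ, true_and] at hB
      exact mem_powerset.2 (sdiff_subset_sdiff hB.2 (Subset.refl A))
    · intro D hD
      simp only [mem_powerset] at hD
      simp only [mem_filter, mem_univ, true_and]
      exact ⟨subset_union_left, union_subset hAC (hD.trans sdiff_subset)⟩
    · intro B hB
      simp only [mem_filter, mem_univ, true_and] at hB
      exact union_sdiff_of_subset hB.1
    · intro D hD
      simp only [mem_powerset] at hD
      exact union_sdiff_cancel_left
        (disjoint_of_subset_right hD sdiff_disjoint.symm)
    · intro B hB
      simp only [mem_filter, mem_univ, true_and] at hB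
      rw [← card_sdiff_add_card_eq_card hB.1, add_comm]
  rw [h1]
  have h2 : ∑ D ∈ (C \ A).powerset, (-1:ℝ)^(A.card + D.card)
      = (-1:ℝ)^A.card * ∑ D ∈ (C \ A).powerset, (-1:ℝ)^D.card := by
    rw [mul_sum]; exact sum_congr rfl fun D _ => (pow_add _ _ _)
  rw [h2]
  have h3 : ∑ D ∈ (C \ A).powerset, (-1:ℝ)^D.card
      = if C \ A = ∅ then 1 else 0 := by
    have := @Finset.sum_powerset_neg_one_pow_card X _ (C \ A)
    have := congrArg (fun z : ℤ => (z : ℝ)) this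
    push_cast at this
    convert this using 2 <;> simp
  rw [h3]
  have h4 : C \ A = ∅ ↔ A = C := by
    rw [sdiff_eq_empty_iff_subset]
    exact ⟨fun h => Subset.antisymm hAC h, fun h => h ▸ Subset.refl _⟩
  by_cases h : A = C
  · rw [if_pos h, if_pos (h4.2 h), mul_one]
  · rw [if_neg h, if_neg (fun he => h (h4.1 he)), mul_zero]

lemma inversion (δ : Finset X → ℝ) (A : Finset X) :
    ∑ B ∈ univ.filter (fun B => A ⊆ B),
      (∑ C ∈ univ.filter (fun C => B ⊆ C), (-1:ℝ)^(B.card + C.card + 1) * δ C)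
    = - δ A := by
  have swap : ∑ B ∈ univ.filter (fun B => A ⊆ B),
      (∑ C ∈ univ.filter (fun C => B ⊆ C), (-1:ℝ)^(B.card + C.card + 1) * δ C)
    = ∑ C : Finset X, ((-1:ℝ)^(C.card+1) * δ C) *
        ∑ B ∈ univ.filter (fun B => A ⊆ B ∧ B ⊆ C), (-1:ℝ)^B.card := by
    calc ∑ B ∈ univ.filter (fun B => A ⊆ B),
          (∑ C ∈ univ.filter (fun C => B ⊆ C), (-1:ℝ)^(B.card + C.card + 1) * δ C)
        = ∑ B : Finset X, ∑ C : Finset X,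
            (if A ⊆ B ∧ B ⊆ C then (-1:ℝ)^(B.card + C.card + 1) * δ C else 0) := by
          rw [sum_filter]
          refine sum_congr rfl fun B _ => ?_
          by_cases h1 : A ⊆ B
          · rw [if_pos h1, sum_filter]
            exact sum_congr rfl fun C _ => by by_cases h2 : B ⊆ C <;> simp [h1, h2]
          · rw [if_neg h1]
            exact (sum_eq_zero fun C _ => by simp [h1]).symm
      _ = ∑ C : Finset X, ∑ B : Finset X,
            (if A ⊆ B ∧ B ⊆ C then (-1:ℝ)^(B.card + C.card + 1) * δ C else 0) :=
          Finset.sum_comm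
      _ = _ := by
          refine sum_congr rfl fun C _ => ?_
          rw [sum_filter, mul_sum]
          refine sum_congr rfl fun B _ => ?_
          by_cases h : A ⊆ B ∧ B ⊆ C
          · rw [if_pos h, if_pos h, pow_add, pow_add, pow_add]
            ring
          · simp [h]
  rw [swap]
  have key : ∀ C : Finset X, ((-1:ℝ)^(C.card+1) * δ C) *
        ∑ B ∈ univ.filter (fun B => A ⊆ B ∧ B ⊆ C), (-1:ℝ)^B.card
      = if C = A then -δ A else 0 := by
    intro C
    by_cases hAC : A ⊆ C
    · rw [alt_sum A C hAC]
      by_cases h : A = C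
      · subst h
        rw [if_pos rfl, if_pos rfl]
        have hpow : (-1:ℝ)^(A.card+1) * (-1:ℝ)^A.card = -1 := by
          rw [← pow_add, show A.card + 1 + A.card = 2 * A.card + 1 by ring,
            pow_succ, pow_mul]
          norm_num
        calc (-1:ℝ)^(A.card+1) * δ A * (-1:ℝ)^A.card
            = ((-1:ℝ)^(A.card+1) * (-1:ℝ)^A.card) * δ A := by ring
          _ = -δ A := by rw [hpow]; ring
      · rw [if_neg h, if_neg (fun he => h he.symm), mul_zero]
    · have : univ.filter (fun B => A ⊆ B ∧ B ⊆ C) = ∅ := by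
        refine filter_eq_empty_iff.2 fun B _ hB => hAC (hB.1.trans hB.2)
      rw [this, sum_empty, mul_zero, if_neg (fun he => hAC (le_of_eq he.symm))]
  rw [sum_congr rfl fun C _ => key C, sum_ite_eq' univ A _]
  simp

end aux

/-- Let `X` be finite and `δ : 𝒫(X) → ℝ` with `δ(A) = 0` whenever `|A| ≤ 1`.
If `λ_A ≥ 0` for every `A ≠ ∅, X`, then `δ` is monotone, satisfies
`δ(A ∪ {c}) + δ(B ∪ {c}) ≥ δ(A ∪ B ∪ {c})`, and consequently the triangle inequality
`δ(A ∪ B) + δ(B ∪ C) ≥ δ(A ∪ C)` whenever `B ≠ ∅`. -/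
theorem stmt2 {X : Type*} [Fintype X] [DecidableEq X] (δ : Finset X → ℝ)
    (hδ : ∀ A : Finset X, A.card ≤ 1 → δ A = 0)
    (hlam : ∀ A : Finset X, A ≠ ∅ → A ≠ Finset.univ →
      0 ≤ ∑ B ∈ Finset.univ.filter (fun B => A ⊆ B),
        (-1 : ℝ) ^ (A.card + B.card + 1) * δ B) :
    (∀ A B : Finset X, A ⊆ B → δ A ≤ δ B) ∧
    (∀ (A B : Finset X) (c : X), δ (A ∪ B ∪ {c}) ≤ δ (A ∪ {c}) + δ (B ∪ {c})) ∧
    (∀ A B C : Finset X, B ≠ ∅ → δ (A ∪ C) ≤ δ (A ∪ B) + δ (B ∪ C)) := by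
  set L : Finset X → ℝ := fun A => ∑ B ∈ univ.filter (fun B => A ⊆ B),
    (-1:ℝ)^(A.card + B.card + 1) * δ B with hL
  -- inversion: δ A = -∑_{B ⊇ A} L B
  have hinv : ∀ A : Finset X, δ A = - ∑ B ∈ univ.filter (fun B => A ⊆ B), L B := by
    intro A
    have := inversion δ A
    rw [hL]
    linarith [this]
  have hLnn : ∀ C : Finset X, C ≠ ∅ → C ≠ univ → 0 ≤ L C := fun C h1 h2 => hlam C h1 h2
  -- key representation
  have hrep : ∀ (A : Finset X) (x : X), x ∈ A →
      δ A = ∑ C ∈ univ.filter (fun C => x ∈ C ∧ ¬ A ⊆ C), L C := by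
    intro A x hx
    have h1 : δ ({x} : Finset X) = 0 := hδ _ (by simp)
    have h2 := hinv ({x} : Finset X)
    rw [h1] at h2
    have h3 : ∑ B ∈ univ.filter (fun B => ({x} : Finset X) ⊆ B), L B = 0 := by linarith
    have hsub : univ.filter (fun C : Finset X => A ⊆ C) ⊆
        univ.filter (fun C => ({x} : Finset X) ⊆ C) := by
      intro C hC
      simp only [mem_filter, mem_univ, true_and] at *
      exact (singleton_subset_iff.2 hx).trans hC
    have hsplit : univ.filter (fun C : Finset X => ({x} : Finset X) ⊆ C)
        = univ.filter (fun C : Finset X => A ⊆ C)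
          ∪ univ.filter (fun C => x ∈ C ∧ ¬ A ⊆ C) := by
      ext C
      simp only [mem_filter, mem_univ, true_and, mem_union, singleton_subset_iff]
      by_cases h : A ⊆ C
      · simp [h, hx]
        exact h hx
      · simp [h]
    have hdisj : Disjoint (univ.filter (fun C : Finset X => A ⊆ C))
        (univ.filter (fun C : Finset X => x ∈ C ∧ ¬ A ⊆ C)) := by
      rw [disjoint_left]
      intro C h1 h2
      simp only [mem_filter, mem_univ, true_and] at h1 h2
      exact h2.2 h1
    rw [hsplit, sum_union hdisj] at h3
    rw [hinv A]
    linarith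
  -- nonnegativity of terms in the representation
  have hterm : ∀ (A : Finset X) (x : X) (C : Finset X),
      C ∈ univ.filter (fun C => x ∈ C ∧ ¬ A ⊆ C) → 0 ≤ L C := by
    intro A x C hC
    simp only [mem_filter, mem_univ, true_and] at hC
    refine hLnn C (fun h => by simp [h] at hC) (fun h => hC.2 (by rw [h]; exact subset_univ A))
  have hnn : ∀ A : Finset X, 0 ≤ δ A := by
    intro A
    rcases A.eq_empty_or_nonempty with rfl | ⟨x, hx⟩
    · rw [hδ ∅ (by simp)]
    · rw [hrep A x hx]
      exact sum_nonneg (fun C hC => hterm A x C hC)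
  -- monotonicity
  have mono : ∀ A B : Finset X, A ⊆ B → δ A ≤ δ B := by
    intro A B hAB
    rcases A.eq_empty_or_nonempty with rfl | ⟨x, hx⟩
    · rw [hδ ∅ (by simp)]; exact hnn B
    · rw [hrep A x hx, hrep B x (hAB hx)]
      refine sum_le_sum_of_subset_of_nonneg ?_ (fun C hC _ => hterm B x C hC)
      intro C hC
      simp only [mem_filter, mem_univ, true_and] at *
      exact ⟨hC.1, fun h => hC.2 (hAB.trans h)⟩
  have two : ∀ (A B : Finset X) (c : X), δ (A ∪ B ∪ {c}) ≤ δ (A ∪ {c}) + δ (B ∪ {c}) := by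
    intro A B c
    have hcA : c ∈ A ∪ B ∪ {c} := by simp
    have hc1 : c ∈ A ∪ ({c} : Finset X) := by simp
    have hc2 : c ∈ B ∪ ({c} : Finset X) := by simp
    rw [hrep _ c hcA, hrep _ c hc1, hrep _ c hc2]
    set s := univ.filter (fun C : Finset X => c ∈ C ∧ ¬ (A ∪ B ∪ {c}) ⊆ C)
    set s1 := univ.filter (fun C : Finset X => c ∈ C ∧ ¬ (A ∪ {c}) ⊆ C)
    set s2 := univ.filter (fun C : Finset X => c ∈ C ∧ ¬ (B ∪ {c}) ⊆ C)
    have hsub : s ⊆ s1 ∪ s2 := by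
      intro C hC
      simp only [s, s1, s2, mem_filter, mem_univ, true_and] at hC ⊢
      rw [mem_union, mem_filter, mem_filter]
      simp only [mem_univ, true_and]
      obtain ⟨h1, h2⟩ := hC
      by_cases ha : A ∪ {c} ⊆ C
      · by_cases hb : B ∪ {c} ⊆ C
        · exact absurd (union_subset (union_subset (subset_union_left.trans ha)
            (subset_union_left.trans hb)) (by simpa using h1)) h2
        · exact Or.inr ⟨h1, hb⟩
      · exact Or.inl ⟨h1, ha⟩
    have hnn1 : ∀ C ∈ s1 ∪ s2, 0 ≤ L C := by
      intro C hC
      rcases mem_union.1 hC with h | h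
      · exact hterm (A ∪ {c}) c C h
      · exact hterm (B ∪ {c}) c C h
    calc ∑ C ∈ s, L C ≤ ∑ C ∈ s1 ∪ s2, L C :=
          sum_le_sum_of_subset_of_nonneg hsub (fun C hC _ => hnn1 C hC)
      _ ≤ ∑ C ∈ s1, L C + ∑ C ∈ s2, L C := by
          have h := Finset.sum_union_inter (s₁ := s1) (s₂ := s2) (f := L)
          have h2 : 0 ≤ ∑ C ∈ s1 ∩ s2, L C :=
            sum_nonneg fun C hC => hnn1 C (mem_union_left _ (mem_of_mem_inter_left hC))
          linarith
  refine ⟨mono, two, ?_⟩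
  intro A B C hB
  obtain ⟨b, hb⟩ := nonempty_iff_ne_empty.2 hB
  have h1 : δ (A ∪ C) ≤ δ (A ∪ C ∪ {b}) := mono _ _ subset_union_left
  have h2 : δ (A ∪ C ∪ {b}) ≤ δ (A ∪ {b}) + δ (C ∪ {b}) := two A C b
  have h3 : δ (A ∪ {b}) ≤ δ (A ∪ B) :=
    mono _ _ (union_subset subset_union_left (by simpa using mem_union_right A hb))
  have h4 : δ (C ∪ {b}) ≤ δ (B ∪ C) :=
    mono _ _ (union_subset subset_union_right (by simpa using mem_union_left C hb))
  linarith
end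

section
/- Every finite L1-embeddable diversity is of negative type. -/
open Finset

private lemma psd_min {ι : Type*} [DecidableEq ι] :
    ∀ (S : Finset ι) (g x : ι → ℝ), (∀ a ∈ S, 0 ≤ g a) →
      0 ≤ ∑ A ∈ S, ∑ B ∈ S, x A * x B * min (g A) (g B) := by
  intro S
  induction S using Finset.strongInduction with
  | _ S IH =>
    intro g x hg
    rcases S.eq_empty_or_nonempty with rfl | hS
    · simp
    · set c := S.inf' hS g with hc
      have hc0 : 0 ≤ c := by
        obtain ⟨b, hb, hbe⟩ := Finset.exists_mem_eq_inf' hS g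
        rw [hc, hbe]; exact hg b hb
      have hcle : ∀ a ∈ S, c ≤ g a := fun a ha => Finset.inf'_le g ha
      have split : ∀ A ∈ S, ∀ B ∈ S, x A * x B * min (g A) (g B)
          = x A * x B * c + x A * x B * min (g A - c) (g B - c) := by
        intro A _ B _
        rw [min_sub_sub_right]; ring
      rw [Finset.sum_congr rfl (fun A hA => Finset.sum_congr rfl (split A hA))]
      simp only [Finset.sum_add_distrib]
      apply add_nonneg
      · have : ∑ A ∈ S, ∑ B ∈ S, x A * x B * c = (∑ A ∈ S, x A) * (∑ B ∈ S, x B) * c := by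
          rw [Finset.sum_mul_sum, Finset.sum_mul]
          exact Finset.sum_congr rfl fun A _ => by rw [Finset.sum_mul]
        rw [this]
        have : (∑ A ∈ S, x A) * (∑ B ∈ S, x B) = (∑ A ∈ S, x A) ^ 2 := by ring
        rw [this]
        exact mul_nonneg (sq_nonneg _) hc0
      · set S' := S.filter (fun a => c < g a) with hS'
        have hsub : S' ⊆ S := Finset.filter_subset _ _
        have hzero : ∀ a ∈ S, a ∉ S' → g a - c = 0 := by
          intro a ha ha'
          have : ¬ c < g a := by
            intro h; exact ha' (Finset.mem_filter.mpr ⟨ha, h⟩)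
          have := hcle a ha
          linarith [lt_or_eq_of_le this]
        have step1 : ∀ A ∈ S,
            ∑ B ∈ S, x A * x B * min (g A - c) (g B - c)
              = ∑ B ∈ S', x A * x B * min (g A - c) (g B - c) := by
          intro A hA
          refine (Finset.sum_subset hsub ?_).symm
          intro B hB hB'
          have h1 : g B - c = 0 := hzero B hB hB'
          have h2 : 0 ≤ g A - c := by linarith [hcle A hA]
          rw [h1, min_eq_right h2, mul_zero]
        rw [Finset.sum_congr rfl step1]
        have step2 : ∑ A ∈ S, ∑ B ∈ S', x A * x B * min (g A - c) (g B - c)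
            = ∑ A ∈ S', ∑ B ∈ S', x A * x B * min (g A - c) (g B - c) := by
          refine (Finset.sum_subset hsub ?_).symm
          intro A hA hA'
          have h1 : g A - c = 0 := hzero A hA hA'
          refine Finset.sum_eq_zero fun B hB => ?_
          have h2 : 0 ≤ g B - c := by
            have := hcle B (hsub hB); linarith
          rw [h1, min_eq_left h2, mul_zero]
        rw [step2]
        have hssub : S' ⊂ S := by
          obtain ⟨b, hb, hbe⟩ := Finset.exists_mem_eq_inf' hS g
          refine Finset.ssubset_iff_of_subset hsub |>.mpr ⟨b, hb, ?_⟩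
          intro hb'
          have := (Finset.mem_filter.mp hb').2
          rw [← hc] at hbe
          linarith [hbe ▸ this]
        exact IH S' hssub (fun a => g a - c) x
          (fun a ha => by simpa using sub_nonneg.mpr (hcle a (hsub ha)))

private lemma psd_min' {ι : Type*} [DecidableEq ι] (S : Finset ι) (g x : ι → ℝ)
    (hx : ∑ A ∈ S, x A = 0) :
    0 ≤ ∑ A ∈ S, ∑ B ∈ S, x A * x B * min (g A) (g B) := by
  rcases S.eq_empty_or_nonempty with rfl | hS
  · simp
  · set c := S.inf' hS g with hc
    have hcle : ∀ a ∈ S, c ≤ g a := fun a ha => Finset.inf'_le g ha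
    have split : ∀ A ∈ S, ∀ B ∈ S, x A * x B * min (g A) (g B)
        = x A * x B * c + x A * x B * min (g A - c) (g B - c) := by
      intro A _ B _
      rw [min_sub_sub_right]; ring
    rw [Finset.sum_congr rfl (fun A hA => Finset.sum_congr rfl (split A hA))]
    simp only [Finset.sum_add_distrib]
    have h1 : ∑ A ∈ S, ∑ B ∈ S, x A * x B * c = 0 := by
      have : ∑ A ∈ S, ∑ B ∈ S, x A * x B * c = (∑ A ∈ S, x A) * (∑ B ∈ S, x B) * c := by
        rw [Finset.sum_mul_sum, Finset.sum_mul]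
        exact Finset.sum_congr rfl fun A _ => by rw [Finset.sum_mul]
      rw [this, hx]; ring
    rw [h1, zero_add]
    exact psd_min S (fun a => g a - c) x (fun a ha => by simpa using sub_nonneg.mpr (hcle a ha))

/-- Every finite `L₁`-embeddable diversity is of negative type. -/
theorem stmt6 {X : Type*} [Fintype X] [DecidableEq X] (δ : Finset X → ℝ)
    (h1 : ∀ A : Finset X, 0 ≤ δ A)
    (h2 : ∀ A : Finset X, δ A = 0 ↔ A.card ≤ 1)
    (h3 : ∀ A B C : Finset X, B.Nonempty → δ (A ∪ C) ≤ δ (A ∪ B) + δ (B ∪ C))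
    (hL1 : ∃ (m : ℕ) (φ : X → Fin m → ℝ), ∀ (A : Finset X) (hA : A.Nonempty),
      δ A = ∑ i : Fin m,
        (A.sup' hA (fun a => φ a i) - A.inf' hA (fun a => φ a i))) :
    ∀ x : Finset X → ℝ, x ∅ = 0 → (∑ A : Finset X, x A) = 0 →
      ∑ A : Finset X, ∑ B : Finset X, x A * x B * δ (A ∪ B) ≤ 0 := by
  intro x hx0 hxsum
  obtain ⟨m, φ, hφ⟩ := hL1
  classical
  set S : Finset (Finset X) := Finset.univ.filter (fun A => A.Nonempty) with hSdef
  have hmemS : ∀ A : Finset X, A ∈ S ↔ A.Nonempty := by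
    intro A; simp [hSdef]
  have hxS : ∀ A : Finset X, A ∉ S → x A = 0 := by
    intro A hA
    have : ¬ A.Nonempty := fun h => hA ((hmemS A).mpr h)
    rw [Finset.not_nonempty_iff_eq_empty.mp this, hx0]
  have hS0 : ∑ A ∈ S, x A = 0 := by
    rw [← hxsum]
    exact Finset.sum_subset (Finset.subset_univ S) (fun A _ hA => hxS A hA)
  -- restrict the double sum to S × S
  have hrestrict : ∑ A : Finset X, ∑ B : Finset X, x A * x B * δ (A ∪ B)
      = ∑ A ∈ S, ∑ B ∈ S, x A * x B * δ (A ∪ B) := by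
    rw [← Finset.sum_subset (Finset.subset_univ S)
        (fun A _ hA => Finset.sum_eq_zero fun B _ => by rw [hxS A hA]; ring)]
    refine Finset.sum_congr rfl fun A _ => ?_
    exact (Finset.sum_subset (Finset.subset_univ S)
        (fun B _ hB => by rw [hxS B hB]; ring)).symm
  rw [hrestrict]
  -- the sup/inf functions
  set s : Fin m → Finset X → ℝ :=
    fun i A => if h : A.Nonempty then A.sup' h (fun a => φ a i) else 0 with hs
  set t : Fin m → Finset X → ℝ :=
    fun i A => if h : A.Nonempty then A.inf' h (fun a => φ a i) else 0 with ht
  have hδ : ∀ A ∈ S, ∀ B ∈ S,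
      δ (A ∪ B) = ∑ i : Fin m, (max (s i A) (s i B) - min (t i A) (t i B)) := by
    intro A hA B hB
    have hAn : A.Nonempty := (hmemS A).mp hA
    have hBn : B.Nonempty := (hmemS B).mp hB
    have hUn : (A ∪ B).Nonempty := hAn.mono Finset.subset_union_left
    rw [hφ (A ∪ B) hUn]
    refine Finset.sum_congr rfl fun i _ => ?_
    have h1 : (A ∪ B).sup' hUn (fun a => φ a i) = max (s i A) (s i B) := by
      rw [Finset.sup'_union hAn hBn]
      simp [hs, hAn, hBn]
    have h2 : (A ∪ B).inf' hUn (fun a => φ a i) = min (t i A) (t i B) := by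
      rw [Finset.inf'_union hAn hBn]
      simp [ht, hAn, hBn]
    rw [h1, h2]
  calc ∑ A ∈ S, ∑ B ∈ S, x A * x B * δ (A ∪ B)
      = ∑ A ∈ S, ∑ B ∈ S, ∑ i : Fin m,
          x A * x B * (max (s i A) (s i B) - min (t i A) (t i B)) := by
        refine Finset.sum_congr rfl fun A hA => Finset.sum_congr rfl fun B hB => ?_
        rw [hδ A hA B hB, Finset.mul_sum]
    _ = ∑ A ∈ S, ∑ i : Fin m, ∑ B ∈ S,
          x A * x B * (max (s i A) (s i B) - min (t i A) (t i B)) := by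
        exact Finset.sum_congr rfl fun A _ => Finset.sum_comm
    _ = ∑ i : Fin m, ∑ A ∈ S, ∑ B ∈ S,
          x A * x B * (max (s i A) (s i B) - min (t i A) (t i B)) := Finset.sum_comm
    _ ≤ 0 := by
        refine Finset.sum_nonpos fun i _ => ?_
        have key' : ∀ A B : ℝ, max A B = A + B - min A B := by
          intro A B
          rcases le_total A B with h | h
          · rw [max_eq_right h, min_eq_left h]; ring
          · rw [max_eq_left h, min_eq_right h]; ring
        have hrw : ∑ A ∈ S, ∑ B ∈ S,
            x A * x B * (max (s i A) (s i B) - min (t i A) (t i B))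
            = (∑ A ∈ S, ∑ B ∈ S, (x A * (x B * s i B) + (x A * s i A) * x B))
              - (∑ A ∈ S, ∑ B ∈ S, x A * x B * min (s i A) (s i B))
              - (∑ A ∈ S, ∑ B ∈ S, x A * x B * min (t i A) (t i B)) := by
          rw [← Finset.sum_sub_distrib, ← Finset.sum_sub_distrib]
          refine Finset.sum_congr rfl fun A _ => ?_
          rw [← Finset.sum_sub_distrib, ← Finset.sum_sub_distrib]
          refine Finset.sum_congr rfl fun B _ => ?_
          rw [key' (s i A) (s i B)]; ring
        rw [hrw]
        have hlin : ∑ A ∈ S, ∑ B ∈ S, (x A * (x B * s i B) + (x A * s i A) * x B) = 0 := by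
          simp only [Finset.sum_add_distrib]
          have e1 : ∑ A ∈ S, ∑ B ∈ S, x A * (x B * s i B)
              = (∑ A ∈ S, x A) * (∑ B ∈ S, x B * s i B) := by
            rw [Finset.sum_mul]
            exact Finset.sum_congr rfl fun A _ => by rw [Finset.mul_sum]
          have e2 : ∑ A ∈ S, ∑ B ∈ S, (x A * s i A) * x B
              = (∑ A ∈ S, x A * s i A) * (∑ B ∈ S, x B) := by
            rw [Finset.sum_mul]
            exact Finset.sum_congr rfl fun A _ => by rw [Finset.mul_sum]
          rw [e1, e2, hS0]; ring
        rw [hlin]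
        have p1 := psd_min' S (fun A => s i A) x hS0
        have p2 := psd_min' S (fun A => t i A) x hS0
        linarith
end

section
/- Let (X, δ) be a diversity on a three-element set X = {a, b, c} such that 2·δ({a, b, c}) ≠ δ({a, b}) + δ({a, c}) + δ({b, c}). Then δ is of negative type but δ is not L1-embeddable. -/
open Finset

set_option maxHeartbeats 1000000 in
/-- A diversity on a three-element set `{a, b, c}` with
`2·δ({a,b,c}) ≠ δ({a,b}) + δ({a,c}) + δ({b,c})` is of negative type but not
`L₁`-embeddable. -/
theorem stmt7 {X : Type*} [Fintype X] [DecidableEq X] (a b c : X)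
    (hab : a ≠ b) (hac : a ≠ c) (hbc : b ≠ c)
    (huniv : (Finset.univ : Finset X) = {a, b, c})
    (δ : Finset X → ℝ)
    (h1 : ∀ A : Finset X, 0 ≤ δ A)
    (h2 : ∀ A : Finset X, δ A = 0 ↔ A.card ≤ 1)
    (h3 : ∀ A B C : Finset X, B.Nonempty → δ (A ∪ C) ≤ δ (A ∪ B) + δ (B ∪ C))
    (hne : 2 * δ {a, b, c} ≠ δ {a, b} + δ {a, c} + δ {b, c}) :
    (∀ x : Finset X → ℝ, x ∅ = 0 → (∑ A : Finset X, x A) = 0 →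
        ∑ A : Finset X, ∑ B : Finset X, x A * x B * δ (A ∪ B) ≤ 0) ∧
    ¬ (∃ (m : ℕ) (φ : X → Fin m → ℝ), ∀ (A : Finset X) (hA : A.Nonempty),
        δ A = ∑ i : Fin m,
          (A.sup' hA (fun x => φ x i) - A.inf' hA (fun x => φ x i))) := by
  -- sum over all subsets expansion
  have mne : ∀ (x : X) (S T : Finset X), x ∈ S → x ∉ T → T ≠ S :=
    fun x S T hS hT h => hT (h ▸ hS)
  have huniv2 : (Finset.univ : Finset (Finset X)) =
      {∅, {a}, {b}, {c}, {a,b}, {a,c}, {b,c}, {a,b,c}} := by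
    ext S
    simp only [mem_univ, true_iff, mem_insert, mem_singleton]
    have hS : S = ({a,b,c} : Finset X).filter (· ∈ S) := by
      rw [filter_mem_eq_inter, ← huniv, univ_inter]
    by_cases ha : a ∈ S <;> by_cases hb : b ∈ S <;> by_cases hc : c ∈ S <;>
      simp only [filter_insert, filter_singleton, ha, hb, hc, if_true, if_false] at hS <;>
      tauto
  have hsum8 : ∀ f : Finset X → ℝ, ∑ A : Finset X, f A =
      f ∅ + f {a} + f {b} + f {c} + f {a,b} + f {a,c} + f {b,c} + f {a,b,c} := by
    intro f
    rw [huniv2]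
    rw [sum_insert (by
        simp only [mem_insert, mem_singleton, not_or]
        exact ⟨mne a {a} ∅ (by simp) (by simp), mne b {b} ∅ (by simp) (by simp),
          mne c {c} ∅ (by simp) (by simp), mne a {a,b} ∅ (by simp) (by simp),
          mne a {a,c} ∅ (by simp) (by simp), mne b {b,c} ∅ (by simp) (by simp),
          mne a {a,b,c} ∅ (by simp) (by simp)⟩),
      sum_insert (by
        simp only [mem_insert, mem_singleton, not_or]
        exact ⟨mne b {b} {a} (by simp) (by simp [hab.symm]),
          mne c {c} {a} (by simp) (by simp [hac.symm]),
          mne b {a,b} {a} (by simp) (by simp [hab.symm]),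
          mne c {a,c} {a} (by simp) (by simp [hac.symm]),
          mne b {b,c} {a} (by simp) (by simp [hab.symm]),
          mne b {a,b,c} {a} (by simp) (by simp [hab.symm])⟩),
      sum_insert (by
        simp only [mem_insert, mem_singleton, not_or]
        exact ⟨mne c {c} {b} (by simp) (by simp [hbc.symm]),
          mne a {a,b} {b} (by simp) (by simp [hab]),
          mne a {a,c} {b} (by simp) (by simp [hab]),
          mne c {b,c} {b} (by simp) (by simp [hbc.symm]),
          mne a {a,b,c} {b} (by simp) (by simp [hab])⟩),
      sum_insert (by
        simp only [mem_insert, mem_singleton, not_or]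
        exact ⟨mne a {a,b} {c} (by simp) (by simp [hac]),
          mne a {a,c} {c} (by simp) (by simp [hac]),
          mne b {b,c} {c} (by simp) (by simp [hbc]),
          mne a {a,b,c} {c} (by simp) (by simp [hac])⟩),
      sum_insert (by
        simp only [mem_insert, mem_singleton, not_or]
        exact ⟨mne b {a,b} {a,c} (by simp) (by simp [hab.symm, hbc]) |>.symm,
          mne a {a,b} {b,c} (by simp) (by simp [hab, hac]) |>.symm,
          mne c {a,b,c} {a,b} (by simp) (by simp [hac.symm, hbc.symm])⟩),
      sum_insert (by
        simp only [mem_insert, mem_singleton, not_or]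
        exact ⟨mne a {a,c} {b,c} (by simp) (by simp [hab, hac]) |>.symm,
          mne b {a,b,c} {a,c} (by simp) (by simp [hab.symm, hbc])⟩),
      sum_insert (by
        simp only [mem_singleton]
        exact mne a {a,b,c} {b,c} (by simp) (by simp [hab, hac])),
      sum_singleton]
    ring
  have da : δ {a} = 0 := (h2 _).2 (by simp)
  have db : δ {b} = 0 := (h2 _).2 (by simp)
  have dc : δ {c} = 0 := (h2 _).2 (by simp)
  constructor
  · -- negative type
    intro x hx0 hxs
    have hpt : δ {a,b} ≤ δ {a,b,c} := by
      have := h3 {a,b} {c} ∅ ⟨c, mem_singleton_self c⟩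
      simpa [dc, show ({a,b} : Finset X) ∪ {c} = {a,b,c} from by ext x; simp; try tauto] using this
    have hqt : δ {a,c} ≤ δ {a,b,c} := by
      have := h3 {a,c} {b} ∅ ⟨b, mem_singleton_self b⟩
      simpa [db, show ({a,c} : Finset X) ∪ {b} = {a,b,c} from by ext x; simp; try tauto] using this
    have hrt : δ {b,c} ≤ δ {a,b,c} := by
      have := h3 {b,c} {a} ∅ ⟨a, mem_singleton_self a⟩
      simpa [da, show ({b,c} : Finset X) ∪ {a} = {a,b,c} from by ext x; simp; try tauto] using this
    have htpq : δ {a,b,c} ≤ δ {a,b} + δ {a,c} := by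
      have := h3 {a,b} {a} {a,c} ⟨a, mem_singleton_self a⟩
      simpa [show ({a,b} : Finset X) ∪ {a,c} = {a,b,c} from by ext x; simp; try tauto,
        show ({a,b} : Finset X) ∪ {a} = {a,b} from by ext x; simp; try tauto,
        show ({a} : Finset X) ∪ {a,c} = {a,c} from by ext x; simp; try tauto] using this
    have htpr : δ {a,b,c} ≤ δ {a,b} + δ {b,c} := by
      have := h3 {a,b} {b} {b,c} ⟨b, mem_singleton_self b⟩
      simpa [show ({a,b} : Finset X) ∪ {b,c} = {a,b,c} from by ext x; simp; try tauto,
        show ({a,b} : Finset X) ∪ {b} = {a,b} from by ext x; simp; try tauto,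
        show ({b} : Finset X) ∪ {b,c} = {b,c} from by ext x; simp; try tauto] using this
    have htqr : δ {a,b,c} ≤ δ {a,c} + δ {b,c} := by
      have := h3 {a,c} {c} {b,c} ⟨c, mem_singleton_self c⟩
      simpa [show ({a,c} : Finset X) ∪ {b,c} = {a,b,c} from by ext x; simp; try tauto,
        show ({a,c} : Finset X) ∪ {c} = {a,c} from by ext x; simp; try tauto,
        show ({c} : Finset X) ∪ {b,c} = {b,c} from by ext x; simp; try tauto] using this
    have hs : x {a} + x {b} + x {c} + x {a,b} + x {a,c} + x {b,c} + x {a,b,c} = 0 := by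
      rw [hsum8 x, hx0] at hxs; linarith
    simp only [hsum8]
    simp only [hx0, zero_mul, mul_zero, zero_add, add_zero]
    simp only [show ({a} : Finset X) ∪ {b} = {a, b} from by ext x; simp; try tauto,
      show ({a} : Finset X) ∪ {c} = {a, c} from by ext x; simp; try tauto,
      show ({a} : Finset X) ∪ {a, b} = {a, b} from by ext x; simp; try tauto,
      show ({a} : Finset X) ∪ {a, c} = {a, c} from by ext x; simp; try tauto,
      show ({a} : Finset X) ∪ {b, c} = {a, b, c} from by ext x; simp; try tauto,
      show ({a} : Finset X) ∪ {a, b, c} = {a, b, c} from by ext x; simp; try tauto,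
      show ({b} : Finset X) ∪ {a} = {a, b} from by ext x; simp; try tauto,
      show ({b} : Finset X) ∪ {c} = {b, c} from by ext x; simp; try tauto,
      show ({b} : Finset X) ∪ {a, b} = {a, b} from by ext x; simp; try tauto,
      show ({b} : Finset X) ∪ {a, c} = {a, b, c} from by ext x; simp; try tauto,
      show ({b} : Finset X) ∪ {b, c} = {b, c} from by ext x; simp; try tauto,
      show ({b} : Finset X) ∪ {a, b, c} = {a, b, c} from by ext x; simp; try tauto,
      show ({c} : Finset X) ∪ {a} = {a, c} from by ext x; simp; try tauto,
      show ({c} : Finset X) ∪ {b} = {b, c} from by ext x; simp; try tauto,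
      show ({c} : Finset X) ∪ {a, b} = {a, b, c} from by ext x; simp; try tauto,
      show ({c} : Finset X) ∪ {a, c} = {a, c} from by ext x; simp; try tauto,
      show ({c} : Finset X) ∪ {b, c} = {b, c} from by ext x; simp; try tauto,
      show ({c} : Finset X) ∪ {a, b, c} = {a, b, c} from by ext x; simp; try tauto,
      show ({a, b} : Finset X) ∪ {a} = {a, b} from by ext x; simp; try tauto,
      show ({a, b} : Finset X) ∪ {b} = {a, b} from by ext x; simp; try tauto,
      show ({a, b} : Finset X) ∪ {c} = {a, b, c} from by ext x; simp; try tauto,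
      show ({a, b} : Finset X) ∪ {a, c} = {a, b, c} from by ext x; simp; try tauto,
      show ({a, b} : Finset X) ∪ {b, c} = {a, b, c} from by ext x; simp; try tauto,
      show ({a, b} : Finset X) ∪ {a, b, c} = {a, b, c} from by ext x; simp; try tauto,
      show ({a, c} : Finset X) ∪ {a} = {a, c} from by ext x; simp; try tauto,
      show ({a, c} : Finset X) ∪ {b} = {a, b, c} from by ext x; simp; try tauto,
      show ({a, c} : Finset X) ∪ {c} = {a, c} from by ext x; simp; try tauto,
      show ({a, c} : Finset X) ∪ {a, b} = {a, b, c} from by ext x; simp; try tauto,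
      show ({a, c} : Finset X) ∪ {b, c} = {a, b, c} from by ext x; simp; try tauto,
      show ({a, c} : Finset X) ∪ {a, b, c} = {a, b, c} from by ext x; simp; try tauto,
      show ({b, c} : Finset X) ∪ {a} = {a, b, c} from by ext x; simp; try tauto,
      show ({b, c} : Finset X) ∪ {b} = {b, c} from by ext x; simp; try tauto,
      show ({b, c} : Finset X) ∪ {c} = {b, c} from by ext x; simp; try tauto,
      show ({b, c} : Finset X) ∪ {a, b} = {a, b, c} from by ext x; simp; try tauto,
      show ({b, c} : Finset X) ∪ {a, c} = {a, b, c} from by ext x; simp; try tauto,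
      show ({b, c} : Finset X) ∪ {a, b, c} = {a, b, c} from by ext x; simp; try tauto,
      show ({a, b, c} : Finset X) ∪ {a} = {a, b, c} from by ext x; simp; try tauto,
      show ({a, b, c} : Finset X) ∪ {b} = {a, b, c} from by ext x; simp; try tauto,
      show ({a, b, c} : Finset X) ∪ {c} = {a, b, c} from by ext x; simp; try tauto,
      show ({a, b, c} : Finset X) ∪ {a, b} = {a, b, c} from by ext x; simp; try tauto,
      show ({a, b, c} : Finset X) ∪ {a, c} = {a, b, c} from by ext x; simp; try tauto,
      show ({a, b, c} : Finset X) ∪ {b, c} = {a, b, c} from by ext x; simp; try tauto,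
        union_self]
    simp only [da, db, dc, mul_zero]
    have hts : δ {a,b,c} * (x {a} + x {b} + x {c} + x {a,b} + x {a,c} + x {b,c} + x {a,b,c})^2 = 0 := by
      rw [hs]; ring
    nlinarith [mul_nonneg (sub_nonneg.2 hpt) (sq_nonneg (x {a} + x {b} + x {a,b})),
      mul_nonneg (sub_nonneg.2 hqt) (sq_nonneg (x {a} + x {c} + x {a,c})),
      mul_nonneg (sub_nonneg.2 hrt) (sq_nonneg (x {b} + x {c} + x {b,c})),
      mul_nonneg (sub_nonneg.2 htpq) (sq_nonneg (x {a})),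
      mul_nonneg (sub_nonneg.2 htpr) (sq_nonneg (x {b})),
      mul_nonneg (sub_nonneg.2 htqr) (sq_nonneg (x {c})),
      hts]
  · -- not L1-embeddable
    rintro ⟨m, φ, hφ⟩
    have sup2 : ∀ (s t : X) (f : X → ℝ) (h : ({s,t}:Finset X).Nonempty),
        ({s,t}:Finset X).sup' h f = f s ⊔ f t := fun s t f h => by
      rw [Finset.sup'_insert (H := singleton_nonempty t), Finset.sup'_singleton]
    have inf2 : ∀ (s t : X) (f : X → ℝ) (h : ({s,t}:Finset X).Nonempty),
        ({s,t}:Finset X).inf' h f = f s ⊓ f t := fun s t f h => by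
      rw [Finset.inf'_insert (H := singleton_nonempty t), Finset.inf'_singleton]
    have sup3 : ∀ (f : X → ℝ) (h : ({a,b,c}:Finset X).Nonempty),
        ({a,b,c}:Finset X).sup' h f = f a ⊔ (f b ⊔ f c) := fun f h => by
      rw [Finset.sup'_insert (H := insert_nonempty b {c}), sup2]
    have inf3 : ∀ (f : X → ℝ) (h : ({a,b,c}:Finset X).Nonempty),
        ({a,b,c}:Finset X).inf' h f = f a ⊓ (f b ⊓ f c) := fun f h => by
      rw [Finset.inf'_insert (H := insert_nonempty b {c}), inf2]
    have key : ∀ x y z : ℝ, 2 * (x ⊔ (y ⊔ z) - x ⊓ (y ⊓ z)) =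
        (x ⊔ y - x ⊓ y) + (x ⊔ z - x ⊓ z) + (y ⊔ z - y ⊓ z) := by
      intro x y z
      rcases le_total x y with h1 | h1 <;> rcases le_total y z with h2 | h2 <;>
        rcases le_total x z with h3 | h3 <;>
        simp [max_def, min_def, h1, h2, h3] <;>
        first
          | linarith
          | (split_ifs <;> linarith)
    apply hne
    rw [hφ {a,b} ⟨a, by simp⟩, hφ {a,c} ⟨a, by simp⟩, hφ {b,c} ⟨b, by simp⟩,
      hφ {a,b,c} ⟨a, by simp⟩]
    rw [← Finset.sum_add_distrib, ← Finset.sum_add_distrib, Finset.mul_sum]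
    refine Finset.sum_congr rfl fun i _ => ?_
    erw [sup3, inf3, sup2, inf2, sup2, inf2, sup2, inf2]
    exact key (φ a i) (φ b i) (φ c i)
end

section
/- Let X be a finite set with |X| ≥ 2 and define δ(A) = 1 for all A ⊆ X with |A| > 1 and δ(A) = 0 for |A| ≤ 1. Then (X, δ) is a diversity of negative type. -/
open Finset

/-- On a finite set `X` with `|X| ≥ 2`, the function `δ` with `δ(A) = 1`
for `|A| > 1` and `δ(A) = 0` otherwise is a diversity of negative type. -/
theorem stmt8 {X : Type*} [Fintype X] [DecidableEq X] (hX : 2 ≤ Fintype.card X)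
    (δ : Finset X → ℝ)
    (hδ : ∀ A : Finset X, δ A = if 1 < A.card then 1 else 0) :
    ((∀ A : Finset X, 0 ≤ δ A) ∧
     (∀ A : Finset X, δ A = 0 ↔ A.card ≤ 1) ∧
     (∀ A B C : Finset X, B.Nonempty → δ (A ∪ C) ≤ δ (A ∪ B) + δ (B ∪ C))) ∧
    (∀ x : Finset X → ℝ, x ∅ = 0 → (∑ A : Finset X, x A) = 0 →
      ∑ A : Finset X, ∑ B : Finset X, x A * x B * δ (A ∪ B) ≤ 0) := by
  constructor
  · refine ⟨?_, ?_, ?_⟩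
    · intro A; rw [hδ]; split <;> norm_num
    · intro A; rw [hδ]; split <;> simp <;> omega
    · intro A B C hB
      rw [hδ, hδ, hδ]
      by_cases h1 : 1 < (A ∪ C).card
      · by_cases h2 : 1 < (A ∪ B).card
        · simp only [h1, h2, if_pos]
          split <;> norm_num
        · by_cases h3 : 1 < (B ∪ C).card
          · simp only [h1, h2, h3, if_pos, if_neg]
            norm_num
          · exfalso
            push_neg at h2 h3
            have hBc : 1 ≤ B.card := hB.card_pos
            have e2 : B = A ∪ B := eq_of_subset_of_card_le subset_union_right
              (by omega)
            have e3 : B = B ∪ C := eq_of_subset_of_card_le subset_union_left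
              (by omega)
            have hA : A ⊆ B := e2 ▸ subset_union_left
            have hC : C ⊆ B := e3 ▸ subset_union_right
            have hB1 : B.card ≤ (A ∪ B).card := card_le_card subset_union_right
            have : (A ∪ C).card ≤ B.card := card_le_card (union_subset hA hC)
            omega
      · simp only [h1, if_neg, not_false_iff]
        split <;> split <;> norm_num
  · intro x hx0 hsum
    have key : ∀ A B : Finset X,
        x A * x B * δ (A ∪ B)
          = x A * x B - (if A = B ∧ A.card ≤ 1 then x A * x B else 0) := by
      intro A B
      rw [hδ]
      by_cases hAB : A = B ∧ A.card ≤ 1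
      · obtain ⟨rfl, hc⟩ := hAB
        simp [Finset.union_self, hc, Nat.not_lt.mpr hc]
      · rw [if_neg hAB]
        by_cases hcard : 1 < (A ∪ B).card
        · rw [if_pos hcard]; ring
        · push_neg at hcard
          rcases A.eq_empty_or_nonempty with rfl | hA
          · simp [hx0]
          rcases B.eq_empty_or_nonempty with rfl | hBne
          · simp [hx0]
          exfalso
          have hAc : 1 ≤ A.card := hA.card_pos
          have hBc : 1 ≤ B.card := hBne.card_pos
          have e2 : A = A ∪ B := eq_of_subset_of_card_le subset_union_left
            (le_trans hcard hAc)
          have e3 : B = A ∪ B := eq_of_subset_of_card_le subset_union_right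
            (le_trans hcard hBc)
          exact hAB ⟨e2.trans e3.symm, le_trans (card_le_card subset_union_left) hcard⟩
    calc ∑ A : Finset X, ∑ B : Finset X, x A * x B * δ (A ∪ B)
        = ∑ A : Finset X, ∑ B : Finset X,
            (x A * x B - (if A = B ∧ A.card ≤ 1 then x A * x B else 0)) := by
          exact Finset.sum_congr rfl fun A _ => Finset.sum_congr rfl fun B _ => key A B
      _ = (∑ A : Finset X, x A) * (∑ B : Finset X, x B)
            - ∑ A : Finset X, ∑ B : Finset X,
              (if A = B ∧ A.card ≤ 1 then x A * x B else 0) := by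
          rw [Finset.sum_mul]
          rw [← Finset.sum_sub_distrib]
          refine Finset.sum_congr rfl fun A _ => ?_
          rw [Finset.mul_sum, ← Finset.sum_sub_distrib]
      _ = - ∑ A : Finset X, ∑ B : Finset X,
              (if A = B ∧ A.card ≤ 1 then x A * x B else 0) := by
          rw [hsum]; ring
      _ ≤ 0 := by
          rw [neg_nonpos]
          refine Finset.sum_nonneg fun A _ => ?_
          have : ∑ B : Finset X, (if A = B ∧ A.card ≤ 1 then x A * x B else 0)
              = if A.card ≤ 1 then x A * x A else 0 := by
            by_cases hc : A.card ≤ 1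
            · simp only [hc, and_true, if_pos]
              rw [Finset.sum_ite_eq]
              simp
            · simp [hc]
          rw [this]
          split
          · exact mul_self_nonneg _
          · exact le_rfl
end

section
/- Let (X, δ) be a finite diversity and define D on pairs of nonempty subsets of X by D(A, B) = δ(A ∪ B) − ½δ(A) − ½δ(B). Then δ is of negative type if and only if D is of negative type as a symmetric function on 𝒫₀(X) × 𝒫₀(X), i.e. ∑_{A,B ∈ 𝒫₀(X)} x_A x_B D(A, B) ≤ 0 for every x ∈ ℝ^{𝒫₀(X)} with ∑_A x_A = 0. -/
open Finset

private lemma aux_sum {X : Type*} [Fintype X] [DecidableEq X] (f : Finset X → ℝ)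
    (h : f ∅ = 0) :
    ∑ A : Finset X, f A = ∑ A : {A : Finset X // A.Nonempty}, f A.1 := by
  classical
  rw [← Finset.sum_filter_add_sum_filter_not Finset.univ (fun A => A.Nonempty) f]
  have h2 : ∑ A ∈ Finset.univ.filter (fun A : Finset X => ¬ A.Nonempty), f A = 0 := by
    apply Finset.sum_eq_zero
    intro A hA
    simp only [Finset.mem_filter, Finset.not_nonempty_iff_eq_empty] at hA
    rw [hA.2, h]
  rw [h2, add_zero]
  exact Finset.sum_subtype (Finset.univ.filter fun A : Finset X => A.Nonempty) (fun A => by simp) f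

private lemma aux_D {X : Type*} [Fintype X] [DecidableEq X] (δ : Finset X → ℝ)
    (D : Finset X → Finset X → ℝ)
    (hD : ∀ A B : Finset X, D A B = δ (A ∪ B) - δ A / 2 - δ B / 2)
    (y : {A : Finset X // A.Nonempty} → ℝ)
    (hy : (∑ A : {A : Finset X // A.Nonempty}, y A) = 0) :
    ∑ A : {A : Finset X // A.Nonempty}, ∑ B : {A : Finset X // A.Nonempty},
        y A * y B * D A.1 B.1
      = ∑ A : {A : Finset X // A.Nonempty}, ∑ B : {A : Finset X // A.Nonempty},
        y A * y B * δ (A.1 ∪ B.1) := by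
  have expand : ∀ A B : {A : Finset X // A.Nonempty},
      y A * y B * D A.1 B.1 = y A * y B * δ (A.1 ∪ B.1)
        - (y A * δ A.1 / 2) * y B - y A * (y B * δ B.1 / 2) := by
    intro A B; rw [hD]; ring
  simp only [expand, Finset.sum_sub_distrib, ← Finset.sum_mul, ← Finset.mul_sum, hy,
    mul_zero, zero_mul, sub_zero]

/-- For a finite diversity `(X, δ)` and
`D(A,B) = δ(A ∪ B) - ½δ(A) - ½δ(B)` on nonempty subsets, `δ` is of negative type iff
`D` is of negative type as a symmetric function on `𝒫₀(X) × 𝒫₀(X)`. -/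
theorem stmt10 {X : Type*} [Fintype X] [DecidableEq X] (δ : Finset X → ℝ)
    (h1 : ∀ A : Finset X, 0 ≤ δ A)
    (h2 : ∀ A : Finset X, δ A = 0 ↔ A.card ≤ 1)
    (h3 : ∀ A B C : Finset X, B.Nonempty → δ (A ∪ C) ≤ δ (A ∪ B) + δ (B ∪ C))
    (D : Finset X → Finset X → ℝ)
    (hD : ∀ A B : Finset X, D A B = δ (A ∪ B) - δ A / 2 - δ B / 2) :
    (∀ x : Finset X → ℝ, x ∅ = 0 → (∑ A : Finset X, x A) = 0 →
        ∑ A : Finset X, ∑ B : Finset X, x A * x B * δ (A ∪ B) ≤ 0)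
      ↔ (∀ x : {A : Finset X // A.Nonempty} → ℝ,
          (∑ A : {A : Finset X // A.Nonempty}, x A) = 0 →
          ∑ A : {A : Finset X // A.Nonempty}, ∑ B : {A : Finset X // A.Nonempty},
            x A * x B * D A.1 B.1 ≤ 0) := by
  classical
  constructor
  · intro hneg y hy
    set x : Finset X → ℝ := fun A => if h : A.Nonempty then y ⟨A, h⟩ else 0 with hx
    have hx0 : x ∅ = 0 := by simp [hx]
    have hxy : ∀ A : {A : Finset X // A.Nonempty}, x A.1 = y A := by
      intro A; simp [hx, A.2]
    have hsum : (∑ A : Finset X, x A) = 0 := by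
      rw [aux_sum x hx0]
      simpa only [hxy] using hy
    have key := hneg x hx0 hsum
    rw [aux_D δ D hD y hy]
    have conv1 : ∑ A : Finset X, ∑ B : Finset X, x A * x B * δ (A ∪ B)
        = ∑ A : {A : Finset X // A.Nonempty}, ∑ B : {A : Finset X // A.Nonempty},
            y A * y B * δ (A.1 ∪ B.1) := by
      rw [aux_sum (fun A => ∑ B : Finset X, x A * x B * δ (A ∪ B)) (by simp [hx0])]
      apply Finset.sum_congr rfl
      intro A _
      rw [aux_sum (fun B => x A.1 * x B * δ (A.1 ∪ B)) (by simp [hx0])]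
      apply Finset.sum_congr rfl
      intro B _
      rw [hxy A, hxy B]
    rw [← conv1]; exact key
  · intro hneg x hx0 hsum
    set y : {A : Finset X // A.Nonempty} → ℝ := fun A => x A.1 with hy
    have hysum : (∑ A : {A : Finset X // A.Nonempty}, y A) = 0 := by
      rw [← aux_sum x hx0]; exact hsum
    have key := hneg y hysum
    rw [aux_D δ D hD y hysum] at key
    have conv1 : ∑ A : Finset X, ∑ B : Finset X, x A * x B * δ (A ∪ B)
        = ∑ A : {A : Finset X // A.Nonempty}, ∑ B : {A : Finset X // A.Nonempty},
            y A * y B * δ (A.1 ∪ B.1) := by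
      rw [aux_sum (fun A => ∑ B : Finset X, x A * x B * δ (A ∪ B)) (by simp [hx0])]
      apply Finset.sum_congr rfl
      intro A _
      exact aux_sum (fun B => x A.1 * x B * δ (A.1 ∪ B)) (by simp [hx0])
    rw [conv1]; exact key
end

section
/- Let (X, δ) be a finite diversity and define D on pairs of nonempty subsets of X by D(A, B) = δ(A ∪ B) − ½δ(A) − ½δ(B). Then δ is of negative type if and only if D is isometric to the square of a Euclidean metric, i.e. there exist m ∈ ℕ and a map φ : 𝒫₀(X) → ℝ^m such that D(A, B) = ‖φ(A) − φ(B)‖² for all nonempty A, B ⊆ X, where ‖·‖ is the Euclidean norm. -/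
open Finset

private lemma hsum0 {X : Type*} [Fintype X] [DecidableEq X] (g : Finset X → ℝ)
    (hg : ∀ S : Finset X, ¬ S.Nonempty → g S = 0) :
    ∑ S : Finset X, g S = ∑ A : {A : Finset X // A.Nonempty}, g A.1 := by
  classical
  rw [← Finset.sum_filter_of_ne (s := Finset.univ) (p := fun S => S.Nonempty)
      (fun S _ h => by by_contra hne; exact h (hg S hne))]
  exact Finset.sum_subtype _ (fun S => by simp) g

/-- For a finite diversity `(X, δ)` and
`D(A,B) = δ(A ∪ B) - ½δ(A) - ½δ(B)` on nonempty subsets, `δ` is of negative type iff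
`D` is isometric to the square of a Euclidean metric. -/
theorem stmt11 {X : Type*} [Fintype X] [DecidableEq X] (δ : Finset X → ℝ)
    (h1 : ∀ A : Finset X, 0 ≤ δ A)
    (h2 : ∀ A : Finset X, δ A = 0 ↔ A.card ≤ 1)
    (h3 : ∀ A B C : Finset X, B.Nonempty → δ (A ∪ C) ≤ δ (A ∪ B) + δ (B ∪ C))
    (D : Finset X → Finset X → ℝ)
    (hD : ∀ A B : Finset X, D A B = δ (A ∪ B) - δ A / 2 - δ B / 2) :
    (∀ x : Finset X → ℝ, x ∅ = 0 → (∑ A : Finset X, x A) = 0 →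
        ∑ A : Finset X, ∑ B : Finset X, x A * x B * δ (A ∪ B) ≤ 0)
      ↔ (∃ (m : ℕ) (φ : {A : Finset X // A.Nonempty} → EuclideanSpace ℝ (Fin m)),
          ∀ A B : {A : Finset X // A.Nonempty}, D A.1 B.1 = ‖φ A - φ B‖ ^ 2) := by
  classical
  constructor
  · -- Forward direction: negative type ⇒ Euclidean embedding
    intro hneg
    by_cases hne : Nonempty {A : Finset X // A.Nonempty}
    swap
    · exact ⟨0, fun _ => 0, fun A B => absurd ⟨A⟩ hne⟩
    obtain ⟨O⟩ := hne
    set M : Matrix {A : Finset X // A.Nonempty} {A : Finset X // A.Nonempty} ℝ :=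
      fun A B => (δ (A.1 ∪ O.1) + δ (B.1 ∪ O.1) - δ (A.1 ∪ B.1) - δ O.1) / 2 with hM
    have key : ∀ y : {A : Finset X // A.Nonempty} → ℝ,
        0 ≤ ∑ A, ∑ B, y A * y B * M A B := by
      intro y
      set s : ℝ := ∑ A : {A : Finset X // A.Nonempty}, y A with hs
      set z : {A : Finset X // A.Nonempty} → ℝ :=
        fun A => y A - if A = O then s else 0 with hz
      set x : Finset X → ℝ :=
        fun S => if h : S.Nonempty then z ⟨S, h⟩ else 0 with hx
      have hxz : ∀ A : {A : Finset X // A.Nonempty}, x A.1 = z A := fun A => by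
        simp [hx, A.2]
      have hx0 : x ∅ = 0 := by simp [hx]
      have hzsum : ∑ A, z A = 0 := by
        simp [hz, Finset.sum_sub_distrib, ← hs]
      have hxs : (∑ S : Finset X, x S) = 0 := by
        rw [hsum0 x (fun S h => by simp [hx, h])]
        simpa [hxz] using hzsum
      have hQ := hneg x hx0 hxs
      have hconv : ∑ S : Finset X, ∑ T : Finset X, x S * x T * δ (S ∪ T)
          = ∑ A, ∑ B, z A * z B * δ (A.1 ∪ B.1) := by
        rw [hsum0 (fun S => ∑ T : Finset X, x S * x T * δ (S ∪ T))
          (fun S h => by simp [hx, h])]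
        refine Finset.sum_congr rfl fun A _ => ?_
        rw [hsum0 (fun T => x A.1 * x T * δ (A.1 ∪ T)) (fun T h => by simp [hx, h])]
        exact Finset.sum_congr rfl fun B _ => by rw [hxz, hxz]
      rw [hconv] at hQ
      set T1 : ℝ := ∑ A, ∑ B, y A * y B * δ (A.1 ∪ B.1) with hT1
      set T2 : ℝ := ∑ A, y A * δ (A.1 ∪ O.1) with hT2
      have eOB : ∑ B, y B * δ (O.1 ∪ B.1) = T2 := by
        rw [hT2]
        exact Finset.sum_congr rfl fun B _ => by rw [Finset.union_comm]
      -- Expansion of the z-quadratic form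
      have exp1 : ∑ A, ∑ B, z A * z B * δ (A.1 ∪ B.1)
          = T1 - s * T2 - s * T2 + s * s * δ O.1 := by
        have step : ∀ A B, z A * z B * δ (A.1 ∪ B.1) =
            y A * y B * δ (A.1 ∪ B.1)
            - (if A = O then s * (y B * δ (A.1 ∪ B.1)) else 0)
            - (if B = O then s * (y A * δ (A.1 ∪ B.1)) else 0)
            + (if B = O then (if A = O then s * (s * δ (A.1 ∪ B.1)) else 0) else 0) := by
          intro A B
          by_cases hA : A = O <;> by_cases hB : B = O <;> simp [hz, hA, hB] <;> ring
        rw [Finset.sum_congr rfl fun A _ => Finset.sum_congr rfl fun B _ => step A B]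
        simp only [Finset.sum_add_distrib, Finset.sum_sub_distrib]
        have d2 : ∑ A, ∑ B, (if A = O then s * (y B * δ (A.1 ∪ B.1)) else 0) = s * T2 := by
          rw [Finset.sum_congr rfl (fun A _ =>
            show (∑ B, if A = O then s * (y B * δ (A.1 ∪ B.1)) else 0)
              = if A = O then ∑ B, s * (y B * δ (A.1 ∪ B.1)) else 0 from by
                split <;> simp)]
          rw [Fintype.sum_ite_eq' O (fun A => ∑ B, s * (y B * δ (A.1 ∪ B.1)))]
          rw [← Finset.mul_sum, eOB]
        have d3 : ∑ A, ∑ B, (if B = O then s * (y A * δ (A.1 ∪ B.1)) else 0) = s * T2 := by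
          rw [Finset.sum_congr rfl (fun A _ =>
            Fintype.sum_ite_eq' O (fun B => s * (y A * δ (A.1 ∪ B.1))))]
          rw [← Finset.mul_sum, hT2]
        have d4 : ∑ A, ∑ B, (if B = O then (if A = O then s * (s * δ (A.1 ∪ B.1)) else 0) else 0)
            = s * s * δ O.1 := by
          rw [Finset.sum_congr rfl (fun A _ =>
            Fintype.sum_ite_eq' O (fun B => if A = O then s * (s * δ (A.1 ∪ B.1)) else 0))]
          rw [Fintype.sum_ite_eq' O (fun A => s * (s * δ (A.1 ∪ O.1)))]
          rw [Finset.union_self]; ring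
        rw [d2, d3, d4, ← hT1]
      -- Expansion of the y-quadratic form against M
      have E1 : ∑ A, ∑ B, y A * y B * δ (A.1 ∪ O.1) = T2 * s := by
        rw [Finset.sum_congr rfl (fun A _ => by
          rw [Finset.sum_congr rfl (fun B _ =>
            show y A * y B * δ (A.1 ∪ O.1) = (y A * δ (A.1 ∪ O.1)) * y B from by ring),
            ← Finset.mul_sum, ← hs])]
        rw [← Finset.sum_mul, hT2]
      have E2 : ∑ A, ∑ B, y A * y B * δ (B.1 ∪ O.1) = s * T2 := by
        rw [Finset.sum_congr rfl (fun A _ => by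
          rw [Finset.sum_congr rfl (fun B _ =>
            show y A * y B * δ (B.1 ∪ O.1) = y A * (y B * δ (B.1 ∪ O.1)) from by ring),
            ← Finset.mul_sum, ← hT2])]
        rw [← Finset.sum_mul, ← hs]
      have E4 : ∑ A, ∑ B, y A * y B * δ O.1 = s * (s * δ O.1) := by
        rw [Finset.sum_congr rfl (fun A _ => by
          rw [Finset.sum_congr rfl (fun B _ =>
            show y A * y B * δ O.1 = (y A * δ O.1) * y B from by ring),
            ← Finset.mul_sum, ← hs])]
        rw [← Finset.sum_mul, ← Finset.sum_mul, ← hs]; ring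
      have exp2 : 2 * ∑ A, ∑ B, y A * y B * M A B
          = T2 * s + s * T2 - T1 - s * (s * δ O.1) := by
        have step2 : ∀ A B : {A : Finset X // A.Nonempty}, 2 * (y A * y B * M A B) =
            y A * y B * δ (A.1 ∪ O.1) + y A * y B * δ (B.1 ∪ O.1)
            - y A * y B * δ (A.1 ∪ B.1) - y A * y B * δ O.1 := by
          intro A B; simp only [hM]; ring
        rw [Finset.mul_sum]
        rw [Finset.sum_congr rfl (fun A _ => Finset.mul_sum Finset.univ _ 2)]
        rw [Finset.sum_congr rfl fun A _ => Finset.sum_congr rfl fun B _ => step2 A B]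
        simp only [Finset.sum_add_distrib, Finset.sum_sub_distrib]
        rw [E1, E2, E4, ← hT1]
      rw [exp1] at hQ; linarith
    -- M is positive semidefinite
    have hPSD : M.PosSemidef := by
      refine Matrix.PosSemidef.of_dotProduct_mulVec_nonneg ?_ ?_
      · ext A B
        rw [Matrix.conjTranspose_apply, star_trivial]; simp only [hM]
        rw [Finset.union_comm B.1 A.1]; ring
      · intro v
        have hdp : dotProduct (star v) (M.mulVec v)
            = ∑ A, ∑ B, v A * v B * M A B := by
          simp only [dotProduct, Matrix.mulVec, Pi.star_apply, star_trivial,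
            Finset.mul_sum]
          exact Finset.sum_congr rfl fun A _ => Finset.sum_congr rfl fun B _ => by ring
        rw [hdp]; exact key v
    open scoped MatrixOrder in
    obtain ⟨B, hB⟩ := CStarAlgebra.nonneg_iff_eq_star_mul_self.mp hPSD.nonneg
    have hMB : ∀ A C : {A : Finset X // A.Nonempty}, M A C = ∑ j, B j A * B j C := by
      intro A C
      rw [hB]
      simp [Matrix.mul_apply, Matrix.conjTranspose_apply, Matrix.star_eq_conjTranspose]
    set m := Fintype.card {A : Finset X // A.Nonempty} with hm
    set φf : {A : Finset X // A.Nonempty} → EuclideanSpace ℝ (Fin m) :=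
      fun A => WithLp.toLp 2 (fun i => B ((Fintype.equivFin _).symm i) A) with hφf
    refine ⟨m, φf, fun A C => ?_⟩
    have hsub : ∀ i, (φf A - φf C) i
        = B ((Fintype.equivFin _).symm i) A - B ((Fintype.equivFin _).symm i) C :=
      fun i => rfl
    rw [EuclideanSpace.norm_eq,
      Real.sq_sqrt (Finset.sum_nonneg fun i _ => sq_nonneg _)]
    rw [Finset.sum_congr rfl fun i (_ : i ∈ Finset.univ) => by
      rw [hsub i, Real.norm_eq_abs, sq_abs]]
    rw [Equiv.sum_comp (Fintype.equivFin {A : Finset X // A.Nonempty}).symm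
      (fun j => (B j A - B j C) ^ 2)]
    rw [hD]
    have expand : ∑ j, (B j A - B j C) ^ 2
        = M A A + M C C - 2 * M A C := by
      rw [hMB, hMB, hMB, Finset.mul_sum]
      rw [← Finset.sum_add_distrib, ← Finset.sum_sub_distrib]
      exact Finset.sum_congr rfl fun j _ => by ring
    rw [expand]
    simp only [hM, Finset.union_self]
    ring
  · -- Reverse direction: Euclidean embedding ⇒ negative type
    rintro ⟨m, φ, hφ⟩ x hx0 hxs
    have hxe : ∀ S : Finset X, ¬ S.Nonempty → x S = 0 := fun S h => by
      rw [Finset.not_nonempty_iff_eq_empty.mp h]; exact hx0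
    rw [hsum0 (fun S => ∑ T : Finset X, x S * x T * δ (S ∪ T))
      (fun S h => by simp [hxe S h])]
    rw [Finset.sum_congr rfl (fun A _ =>
      hsum0 (fun T => x A.1 * x T * δ (A.1 ∪ T)) (fun T h => by simp [hxe T h]))]
    set y : {A : Finset X // A.Nonempty} → ℝ := fun A => x A.1 with hy
    have hys : ∑ A, y A = 0 := by
      rw [hy, ← hsum0 x hxe]; exact hxs
    -- replace δ (A ∪ B) via D
    have hδ : ∀ A C : {A : Finset X // A.Nonempty},
        y A * y C * δ (A.1 ∪ C.1)
          = y A * y C * ‖φ A - φ C‖ ^ 2 + (y A * (δ A.1 / 2)) * y C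
            + y A * (y C * (δ C.1 / 2)) := by
      intro A C
      have hc : δ (A.1 ∪ C.1) = ‖φ A - φ C‖ ^ 2 + δ A.1 / 2 + δ C.1 / 2 := by
        have h1' := hD A.1 C.1
        have h2' := hφ A C
        linarith
      rw [hc]; ring
    rw [Finset.sum_congr rfl fun A _ => Finset.sum_congr rfl fun C _ => hδ A C]
    simp only [Finset.sum_add_distrib]
    have z1 : ∑ A, ∑ C, (y A * (δ A.1 / 2)) * y C = 0 := by
      rw [Finset.sum_congr rfl (fun A _ => by rw [← Finset.mul_sum, hys, mul_zero])]
      simp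
    have z2 : ∑ A, ∑ C, y A * (y C * (δ C.1 / 2)) = 0 := by
      rw [Finset.sum_congr rfl (fun A _ => by rw [← Finset.mul_sum])]
      rw [← Finset.sum_mul, hys, zero_mul]
    rw [z1, z2, add_zero, add_zero]
    -- main inner-product estimate
    have hexp : ∀ A C : {A : Finset X // A.Nonempty},
        y A * y C * ‖φ A - φ C‖ ^ 2
          = (y A * ‖φ A‖ ^ 2) * y C + y A * (y C * ‖φ C‖ ^ 2)
            - 2 * (y A * y C * (inner ℝ (φ A) (φ C) : ℝ)) := by
      intro A C
      rw [norm_sub_sq_real]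
      ring
    rw [Finset.sum_congr rfl fun A _ => Finset.sum_congr rfl fun C _ => hexp A C]
    simp only [Finset.sum_sub_distrib, Finset.sum_add_distrib]
    have w1 : ∑ A, ∑ C, (y A * ‖φ A‖ ^ 2) * y C = 0 := by
      rw [Finset.sum_congr rfl (fun A _ => by rw [← Finset.mul_sum, hys, mul_zero])]
      simp
    have w2 : ∑ A, ∑ C, y A * (y C * ‖φ C‖ ^ 2) = 0 := by
      rw [Finset.sum_congr rfl (fun A _ => by rw [← Finset.mul_sum])]
      rw [← Finset.sum_mul, hys, zero_mul]
    rw [w1, w2]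
    have w3 : ∑ A, ∑ C, 2 * (y A * y C * (inner ℝ (φ A) (φ C) : ℝ))
        = 2 * (inner ℝ (∑ A, y A • φ A) (∑ C, y C • φ C) : ℝ) := by
      rw [sum_inner, Finset.mul_sum]
      refine Finset.sum_congr rfl fun A _ => ?_
      rw [inner_sum, Finset.mul_sum]
      refine Finset.sum_congr rfl fun C _ => ?_
      rw [real_inner_smul_left, real_inner_smul_right]
      ring
    rw [w3]
    have := real_inner_self_nonneg (x := ∑ A, y A • φ A)
    linarith
end

section
/- Let (X, δ) be a finite diversity of negative type. Then the induced metric d(x, y) = δ({x, y}) on X is L1-embeddable. -/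
open Finset

set_option linter.unusedSectionVars false
set_option maxHeartbeats 1000000

section Aux

variable {X : Type*} [Fintype X] [DecidableEq X]

private lemma altsum (W : Finset X) :
    ∑ S ∈ W.powerset, (-1:ℝ)^S.card = if W = ∅ then 1 else 0 := by
  have h := Finset.sum_powerset_neg_one_pow_card (x := W)
  have h2 : ((∑ S ∈ W.powerset, (-1:ℤ)^S.card : ℤ) : ℝ) = ((if W = ∅ then 1 else 0 : ℤ) : ℝ) := by
    rw [h]
  push_cast at h2
  convert h2 using 2

private lemma keysum (C U : Finset X) :
    ∑ T : Finset X, (if C ⊆ T ∧ T ⊆ U then (-1:ℝ)^T.card else 0)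
      = if U = C then (-1:ℝ)^C.card else 0 := by
  by_cases hCU : C ⊆ U
  · rw [← Finset.sum_filter]
    have hdisj : ∀ S ∈ (U \ C).powerset, Disjoint S C := by
      intro S hS
      simp only [mem_powerset] at hS
      exact Finset.disjoint_left.mpr (fun {a} haS haC => (mem_sdiff.mp (hS haS)).2 haC)
    have hbij : ∑ T ∈ univ.filter (fun T : Finset X => C ⊆ T ∧ T ⊆ U), (-1:ℝ)^T.card
        = ∑ S ∈ (U \ C).powerset, (-1:ℝ)^(S ∪ C).card := by
      refine Finset.sum_nbij' (fun T => T \ C) (fun S => S ∪ C) ?_ ?_ ?_ ?_ ?_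
      · intro T hT
        simp only [mem_filter, mem_univ, true_and] at hT
        simp only [mem_powerset]
        exact sdiff_subset_sdiff hT.2 subset_rfl
      · intro S hS
        have h1 := (mem_powerset.mp hS).trans (sdiff_subset)
        simp only [mem_filter, mem_univ, true_and]
        exact ⟨subset_union_right, union_subset h1 hCU⟩
      · intro T hT
        simp only [mem_filter, mem_univ, true_and] at hT
        exact sdiff_union_of_subset hT.1
      · intro S hS
        exact union_sdiff_cancel_right (hdisj S hS)
      · intro T hT
        simp only [mem_filter, mem_univ, true_and] at hT
        rw [sdiff_union_of_subset hT.1]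
    rw [hbij]
    have hcard : ∀ S ∈ (U \ C).powerset, (-1:ℝ)^(S ∪ C).card = (-1:ℝ)^C.card * (-1:ℝ)^S.card := by
      intro S hS
      rw [card_union_of_disjoint (hdisj S hS)]
      ring
    rw [Finset.sum_congr rfl hcard, ← Finset.mul_sum, altsum]
    simp only [sdiff_eq_empty_iff_subset]
    by_cases hUC : U ⊆ C
    · rw [if_pos hUC, if_pos (subset_antisymm hUC hCU), mul_one]
    · rw [if_neg hUC, if_neg (fun h => hUC (le_of_eq h)), mul_zero]
  · rw [if_neg (by rintro rfl; exact hCU subset_rfl)]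
    apply Finset.sum_eq_zero
    intro T _
    rw [if_neg]
    rintro ⟨h1, h2⟩
    exact hCU (h1.trans h2)

private noncomputable def alphaF (δ : Finset X → ℝ) (T : Finset X) : ℝ :=
  ∑ U : Finset X, if T ⊆ U then (-1:ℝ)^(U.card + T.card) * δ U else 0

private lemma inversion_s12 (δ : Finset X → ℝ) (C : Finset X) :
    ∑ T : Finset X, (if C ⊆ T then alphaF δ T else 0) = δ C := by
  have step1 : ∀ T : Finset X, (if C ⊆ T then alphaF δ T else 0)
      = ∑ U : Finset X, ((-1:ℝ)^U.card * δ U) * (if C ⊆ T ∧ T ⊆ U then (-1:ℝ)^T.card else 0) := by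
    intro T
    by_cases hCT : C ⊆ T
    · rw [if_pos hCT]
      unfold alphaF
      apply Finset.sum_congr rfl
      intro U _
      by_cases hTU : T ⊆ U
      · rw [if_pos hTU, if_pos ⟨hCT, hTU⟩, pow_add]; ring
      · rw [if_neg hTU, if_neg (fun h => hTU h.2), mul_zero]
    · rw [if_neg hCT]
      symm
      apply Finset.sum_eq_zero
      intro U _
      rw [if_neg (fun h => hCT h.1), mul_zero]
  rw [Finset.sum_congr rfl (fun T _ => step1 T), Finset.sum_comm]
  have step2 : ∀ U : Finset X,
      ∑ T : Finset X, ((-1:ℝ)^U.card * δ U) * (if C ⊆ T ∧ T ⊆ U then (-1:ℝ)^T.card else 0)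
      = ((-1:ℝ)^U.card * δ U) * (if U = C then (-1:ℝ)^C.card else 0) := by
    intro U
    rw [← Finset.mul_sum, keysum]
  rw [Finset.sum_congr rfl (fun U _ => step2 U)]
  have : ∀ U : Finset X, ((-1:ℝ)^U.card * δ U) * (if U = C then (-1:ℝ)^C.card else 0)
      = if U = C then ((-1:ℝ)^U.card * δ U) * (-1:ℝ)^C.card else 0 := by
    intro U; by_cases h : U = C <;> simp [h]
  rw [Finset.sum_congr rfl (fun U _ => this U), Finset.sum_ite_eq' univ C
    (fun U => ((-1:ℝ)^U.card * δ U) * (-1:ℝ)^C.card), if_pos (mem_univ C)]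
  rw [mul_comm, ← mul_assoc, ← pow_add, ← two_mul, pow_mul]
  norm_num

private lemma alphaNeg (δ : Finset X → ℝ)
    (hneg : ∀ x : Finset X → ℝ, x ∅ = 0 → (∑ A : Finset X, x A) = 0 →
      ∑ A : Finset X, ∑ B : Finset X, x A * x B * δ (A ∪ B) ≤ 0)
    (T : Finset X) (hT1 : T.Nonempty) (hT2 : T ≠ univ) :
    alphaF δ T ≤ 0 := by
  set x : Finset X → ℝ := fun A => if T ⊆ A then (-1:ℝ)^(A.card + T.card) else 0 with hx
  have hx0 : x ∅ = 0 := by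
    simp only [hx]
    rw [if_neg]
    intro h
    exact hT1.ne_empty (subset_empty.mp h)
  have hterm : ∀ (S A : Finset X), (if A ⊆ S then x A else 0)
      = (-1:ℝ)^T.card * (if T ⊆ A ∧ A ⊆ S then (-1:ℝ)^A.card else 0) := by
    intro S A
    simp only [hx]
    by_cases h1 : A ⊆ S
    · by_cases h2 : T ⊆ A
      · rw [if_pos h1, if_pos h2, if_pos ⟨h2, h1⟩, pow_add]; ring
      · rw [if_pos h1, if_neg h2, if_neg (fun h => h2 h.1), mul_zero]
    · rw [if_neg h1, if_neg (fun h => h1 h.2), mul_zero]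
  have ysum : ∀ S : Finset X, ∑ A : Finset X, (if A ⊆ S then x A else 0)
      = if S = T then 1 else 0 := by
    intro S
    rw [Finset.sum_congr rfl (fun A _ => hterm S A), ← Finset.mul_sum, keysum]
    by_cases h : S = T
    · rw [if_pos h, if_pos h, ← pow_add, ← two_mul, pow_mul]; norm_num
    · rw [if_neg h, if_neg h, mul_zero]
  have hxsum : (∑ A : Finset X, x A) = 0 := by
    have := ysum univ
    simp only [subset_univ, if_pos] at this
    rw [this, if_neg (fun h => hT2 h.symm)]
  have hQ := hneg x hx0 hxsum
  have hrw : ∑ A : Finset X, ∑ B : Finset X, x A * x B * δ (A ∪ B) = alphaF δ T := by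
    have e1 : ∀ A B : Finset X, x A * x B * δ (A ∪ B)
        = ∑ S : Finset X, (if A ⊆ S then x A else 0) * (if B ⊆ S then x B else 0)
            * alphaF δ S := by
      intro A B
      rw [show δ (A ∪ B) = ∑ S : Finset X, (if A ∪ B ⊆ S then alphaF δ S else 0) from
        (inversion_s12 δ (A ∪ B)).symm, Finset.mul_sum]
      apply Finset.sum_congr rfl
      intro S _
      by_cases hA : A ⊆ S
      · by_cases hB : B ⊆ S
        · rw [if_pos (union_subset hA hB), if_pos hA, if_pos hB]
        · simp [hB, union_subset_iff]
      · simp [hA, union_subset_iff]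
    calc ∑ A : Finset X, ∑ B : Finset X, x A * x B * δ (A ∪ B)
        = ∑ A : Finset X, ∑ B : Finset X, ∑ S : Finset X,
            (if A ⊆ S then x A else 0) * (if B ⊆ S then x B else 0) * alphaF δ S := by
          exact Finset.sum_congr rfl (fun A _ => Finset.sum_congr rfl (fun B _ => e1 A B))
      _ = ∑ S : Finset X, ∑ A : Finset X, ∑ B : Finset X,
            (if A ⊆ S then x A else 0) * (if B ⊆ S then x B else 0) * alphaF δ S := by
          rw [Finset.sum_congr rfl (fun A (_ : A ∈ univ) => Finset.sum_comm)]
          exact Finset.sum_comm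
      _ = ∑ S : Finset X, (∑ A : Finset X, (if A ⊆ S then x A else 0))
            * (∑ B : Finset X, (if B ⊆ S then x B else 0)) * alphaF δ S := by
          apply Finset.sum_congr rfl
          intro S _
          rw [Finset.sum_mul_sum, Finset.sum_mul]
          exact Finset.sum_congr rfl (fun A _ => by rw [Finset.sum_mul])
      _ = ∑ S : Finset X, (if S = T then alphaF δ S else 0) := by
          apply Finset.sum_congr rfl
          intro S _
          rw [ysum S]
          by_cases h : S = T <;> simp [h]
      _ = alphaF δ T := by
          rw [Finset.sum_ite_eq' univ T (fun S => alphaF δ S), if_pos (mem_univ T)]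
  rwa [hrw] at hQ

end Aux

/-- The induced metric `d(x,y) = δ({x,y})` of a finite negative type
diversity is `L₁`-embeddable. -/
theorem stmt12 {X : Type*} [Fintype X] [DecidableEq X] (δ : Finset X → ℝ)
    (h1 : ∀ A : Finset X, 0 ≤ δ A)
    (h2 : ∀ A : Finset X, δ A = 0 ↔ A.card ≤ 1)
    (h3 : ∀ A B C : Finset X, B.Nonempty → δ (A ∪ C) ≤ δ (A ∪ B) + δ (B ∪ C))
    (hneg : ∀ x : Finset X → ℝ, x ∅ = 0 → (∑ A : Finset X, x A) = 0 →
      ∑ A : Finset X, ∑ B : Finset X, x A * x B * δ (A ∪ B) ≤ 0) :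
    ∃ (m : ℕ) (ψ : X → Fin m → ℝ), ∀ x y : X,
      δ {x, y} = ∑ i : Fin m, |ψ x i - ψ y i| := by
  classical
  set α := alphaF δ with hα
  -- indicator
  set ind : X → Finset X → ℝ := fun x T => if x ∈ T then 1 else 0 with hind
  set c : Finset X → ℝ := fun T => -(α T) / 2 with hc
  have hsing : ∀ a : X, ∑ T : Finset X, α T * ind a T = 0 := by
    intro a
    have hinv := inversion_s12 δ {a}
    have hδ : δ {a} = 0 := (h2 {a}).mpr (by simp)
    rw [hδ] at hinv
    rw [← hinv]
    apply Finset.sum_congr rfl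
    intro T _
    simp only [hind, singleton_subset_iff]
    by_cases h : a ∈ T <;> simp [h, hα]
  have hmain : ∀ x y : X, δ {x, y} = ∑ T : Finset X, |c T * ind x T - c T * ind y T| := by
    intro x y
    have hinv := inversion_s12 δ {x, y}
    have e1 : ∀ T : Finset X, (if ({x, y} : Finset X) ⊆ T then α T else 0)
        = α T * (ind x T * ind y T) := by
      intro T
      simp only [hind, insert_subset_iff, singleton_subset_iff]
      by_cases hx : x ∈ T <;> by_cases hy : y ∈ T <;> simp [hx, hy]
    have e2 : ∀ T : Finset X, |c T * ind x T - c T * ind y T|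
        = α T * (ind x T * ind y T) - (α T / 2) * ind x T - (α T / 2) * ind y T := by
      intro T
      by_cases hx : x ∈ T <;> by_cases hy : y ∈ T
      · simp only [hind, if_pos hx, if_pos hy]; rw [sub_self, abs_zero]; ring
      · have hT1 : T.Nonempty := ⟨x, hx⟩
        have hT2 : T ≠ univ := fun h => hy (h ▸ mem_univ y)
        have := alphaNeg δ hneg T hT1 hT2
        simp only [hind, if_pos hx, if_neg hy]
        rw [mul_one, mul_zero, sub_zero, abs_of_nonneg (by rw [hc]; linarith)]
        rw [hc]; ring
      · have hT1 : T.Nonempty := ⟨y, hy⟩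
        have hT2 : T ≠ univ := fun h => hx (h ▸ mem_univ x)
        have := alphaNeg δ hneg T hT1 hT2
        simp only [hind, if_neg hx, if_pos hy]
        rw [mul_zero, mul_one, zero_sub, abs_neg, abs_of_nonneg (by rw [hc]; linarith)]
        rw [hc]; ring
      · simp only [hind, if_neg hx, if_neg hy]
        rw [mul_zero, sub_self, abs_zero]; ring
    rw [Finset.sum_congr rfl (fun T _ => e2 T)]
    rw [Finset.sum_sub_distrib, Finset.sum_sub_distrib]
    have z1 : ∑ T : Finset X, (α T / 2) * ind x T = 0 := by
      have := hsing x
      have : ∑ T : Finset X, (α T / 2) * ind x T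
          = (1/2) * ∑ T : Finset X, α T * ind x T := by
        rw [Finset.mul_sum]; exact Finset.sum_congr rfl (fun T _ => by ring)
      rw [this, hsing x, mul_zero]
    have z2 : ∑ T : Finset X, (α T / 2) * ind y T = 0 := by
      have : ∑ T : Finset X, (α T / 2) * ind y T
          = (1/2) * ∑ T : Finset X, α T * ind y T := by
        rw [Finset.mul_sum]; exact Finset.sum_congr rfl (fun T _ => by ring)
      rw [this, hsing y, mul_zero]
    rw [z1, z2, sub_zero, sub_zero, ← Finset.sum_congr rfl (fun T _ => e1 T), hinv]
  -- reindex by Fin m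
  refine ⟨Fintype.card (Finset X), fun x i => c ((Fintype.equivFin (Finset X)).symm i) *
    ind x ((Fintype.equivFin (Finset X)).symm i), ?_⟩
  intro x y
  rw [hmain x y]
  exact (Equiv.sum_comp (Fintype.equivFin (Finset X)).symm
    (fun T => |c T * ind x T - c T * ind y T|)).symm
end

section
/- Let k ∈ ℕ and let 𝒳 be any finite subset of ℝ^k on which δ_neg restricts (i.e. δ defined by δ(A) = δ_neg(A) for A ⊆ 𝒳). Then δ is of negative type: for every vector x ∈ ℝ^{𝒫(𝒳)} with x_∅ = 0 and ∑_{A⊆𝒳} x_A = 0 one has ∑_{A⊆𝒳} ∑_{B⊆𝒳} x_A x_B δ_neg(A ∪ B) ≤ 0. -/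
open Finset

attribute [local instance] Classical.propDecidable


lemma doubleSum_mul {ι : Type*} (Q : Finset ι) (x : ι → ℝ) (c : ℝ) :
    ∑ A ∈ Q, ∑ B ∈ Q, c * (x A * x B) = c * (∑ A ∈ Q, x A) * (∑ A ∈ Q, x A) := by
  rw [mul_assoc, Finset.sum_mul_sum, Finset.mul_sum]
  exact Finset.sum_congr rfl fun A _ => by rw [Finset.mul_sum]

lemma minKernel_nonneg {ι : Type*} (x : ι → ℝ) :
    ∀ (Q : Finset ι) (g : ι → ℝ), (∀ A ∈ Q, 0 ≤ g A) →
      0 ≤ ∑ A ∈ Q, ∑ B ∈ Q, x A * x B * min (g A) (g B) := by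
  intro Q
  induction Q using Finset.strongInduction with
  | _ Q ih =>
    intro g hg
    rcases Q.eq_empty_or_nonempty with rfl | hQ
    · simp
    set m := Q.inf' hQ g with hm
    have hm0 : 0 ≤ m := Finset.le_inf' hQ g hg
    obtain ⟨A₀, hA₀, hA₀m⟩ := Finset.exists_mem_eq_inf' hQ g
    set Q' : Finset ι := Q.filter (fun A => g A ≠ m) with hQ'
    have hsub : Q' ⊆ Q := Finset.filter_subset _ _
    have hss : Q' ⊂ Q := by
      refine ⟨hsub, fun h => ?_⟩
      have := h hA₀
      rw [hQ', Finset.mem_filter] at this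
      exact this.2 hA₀m.symm
    have hmem : ∀ A ∈ Q, m ≤ g A := fun A hA => Finset.inf'_le g hA
    have hsplit : ∀ A ∈ Q, ∀ B ∈ Q,
        x A * x B * min (g A) (g B)
          = m * (x A * x B) + x A * x B * min (g A - m) (g B - m) := by
      intro A hA B hB
      have : min (g A) (g B) = m + min (g A - m) (g B - m) := by
        rcases le_total (g A) (g B) with h | h
        · rw [min_eq_left h, min_eq_left (by linarith)]; ring
        · rw [min_eq_right h, min_eq_right (by linarith)]; ring
      rw [this]; ring
    have hsum1 : ∑ A ∈ Q, ∑ B ∈ Q, x A * x B * min (g A) (g B)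
        = m * (∑ A ∈ Q, x A) * (∑ A ∈ Q, x A)
          + ∑ A ∈ Q, ∑ B ∈ Q, x A * x B * min (g A - m) (g B - m) := by
      rw [Finset.sum_congr rfl (fun A hA => Finset.sum_congr rfl (fun B hB => hsplit A hA B hB))]
      simp only [Finset.sum_add_distrib]
      rw [doubleSum_mul]
    -- restrict second sum to Q'
    have hrestrict : ∑ A ∈ Q, ∑ B ∈ Q, x A * x B * min (g A - m) (g B - m)
        = ∑ A ∈ Q', ∑ B ∈ Q', x A * x B * min (g A - m) (g B - m) := by
      rw [← Finset.sum_subset hsub (fun A hA hA' => ?_)]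
      · refine Finset.sum_congr rfl fun A hA => ?_
        refine (Finset.sum_subset hsub fun B hB hB' => ?_).symm
        have hgB : g B = m := by
          by_contra h; exact hB' (Finset.mem_filter.mpr ⟨hB, h⟩)
        have : g A - m ≥ 0 := by linarith [hmem A (hsub hA)]
        rw [hgB, sub_self, min_eq_right this, mul_zero]
      · have hgA : g A = m := by
          by_contra h; exact hA' (Finset.mem_filter.mpr ⟨hA, h⟩)
        refine Finset.sum_eq_zero fun B hB => ?_
        have : g B - m ≥ 0 := by linarith [hmem B hB]
        rw [hgA, sub_self, min_eq_left this, mul_zero]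
    have hih : 0 ≤ ∑ A ∈ Q', ∑ B ∈ Q', x A * x B * min (g A - m) (g B - m) := by
      refine ih Q' hss _ fun A hA => ?_
      linarith [hmem A (hsub hA)]
    rw [hsum1, hrestrict]
    nlinarith [sq_nonneg (∑ A ∈ Q, x A), hm0, mul_nonneg hm0 (sq_nonneg (∑ A ∈ Q, x A))]

lemma minKernel_nonneg' {ι : Type*} (Q : Finset ι) (x f : ι → ℝ)
    (hx : ∑ A ∈ Q, x A = 0) :
    0 ≤ ∑ A ∈ Q, ∑ B ∈ Q, x A * x B * min (f A) (f B) := by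
  rcases Q.eq_empty_or_nonempty with rfl | hQ
  · simp
  set c := Q.inf' hQ f with hc
  have key : ∀ A ∈ Q, ∀ B ∈ Q, x A * x B * min (f A) (f B)
      = c * (x A * x B) + x A * x B * min (f A - c) (f B - c) := by
    intro A hA B hB
    have : min (f A) (f B) = c + min (f A - c) (f B - c) := by
      rcases le_total (f A) (f B) with h | h
      · rw [min_eq_left h, min_eq_left (by linarith)]; ring
      · rw [min_eq_right h, min_eq_right (by linarith)]; ring
    rw [this]; ring
  rw [Finset.sum_congr rfl (fun A hA => Finset.sum_congr rfl (fun B hB => key A hA B hB))]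
  simp only [Finset.sum_add_distrib]
  rw [doubleSum_mul, hx]
  simp only [mul_zero, zero_mul, zero_add]
  exact minKernel_nonneg x Q _ (fun A hA => by linarith [Finset.inf'_le f hA])

lemma maxKernel_nonpos {ι : Type*} (Q : Finset ι) (x f : ι → ℝ)
    (hx : ∑ A ∈ Q, x A = 0) :
    ∑ A ∈ Q, ∑ B ∈ Q, x A * x B * max (f A) (f B) ≤ 0 := by
  have key : ∀ A B : ι, x A * x B * max (f A) (f B)
      = (x A * f A) * x B + x A * (x B * f B) - x A * x B * min (f A) (f B) := by
    intro A B
    have : max (f A) (f B) = f A + f B - min (f A) (f B) := by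
      rcases le_total (f A) (f B) with h | h
      · rw [max_eq_right h, min_eq_left h]; ring
      · rw [max_eq_left h, min_eq_right h]; ring
    rw [this]; ring
  simp only [key, Finset.sum_sub_distrib, Finset.sum_add_distrib]
  have h1 : ∑ A ∈ Q, ∑ B ∈ Q, (x A * f A) * x B = 0 := by
    simp [← Finset.mul_sum, hx]
  have h2 : ∑ A ∈ Q, ∑ B ∈ Q, x A * (x B * f B) = 0 := by
    simp only [← Finset.mul_sum]
    rw [← Finset.sum_mul, hx, zero_mul]
  rw [h1, h2]
  simpa using minKernel_nonneg' Q x f hx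

/-- The diversity `δ_neg` on `ℝ^k`:
`δ_neg(A) = ∑ᵢ max{aᵢ : a ∈ A} − min{∑ᵢ aᵢ : a ∈ A}` for nonempty finite `A`, and
`δ_neg(∅) = 0`. -/
noncomputable def deltaNeg {k : ℕ} (A : Finset (Fin k → ℝ)) : ℝ :=
  if h : A.Nonempty then
    (∑ i : Fin k, A.sup' h (fun a => a i)) - A.inf' h (fun a => ∑ i : Fin k, a i)
  else 0

/-- For any finite subset `𝒳` of `ℝ^k`, the restriction of `δ_neg`
to subsets of `𝒳` is of negative type. -/
theorem stmt14 (k : ℕ) (𝒳 : Finset (Fin k → ℝ)) :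
    ∀ x : Finset (Fin k → ℝ) → ℝ, x ∅ = 0 → (∑ A ∈ 𝒳.powerset, x A) = 0 →
      ∑ A ∈ 𝒳.powerset, ∑ B ∈ 𝒳.powerset, x A * x B * deltaNeg (A ∪ B) ≤ 0 := by
  intro x hx0 hxsum
  set P := 𝒳.powerset with hP
  set M : Fin k → Finset (Fin k → ℝ) → ℝ :=
    fun i A => if h : A.Nonempty then A.sup' h (fun a => a i) else 0 with hM
  set N : Finset (Fin k → ℝ) → ℝ :=
    fun A => if h : A.Nonempty then A.inf' h (fun a => ∑ i : Fin k, a i) else 0 with hN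
  have key : ∀ A B : Finset (Fin k → ℝ), x A * x B * deltaNeg (A ∪ B)
      = (∑ i : Fin k, x A * x B * max (M i A) (M i B))
        - x A * x B * min (N A) (N B) := by
    intro A B
    rcases A.eq_empty_or_nonempty with rfl | hA
    · simp [hx0]
    rcases B.eq_empty_or_nonempty with rfl | hB
    · simp [hx0]
    have hAB : (A ∪ B).Nonempty := hA.mono Finset.subset_union_left
    rw [deltaNeg, dif_pos hAB]
    have h1 : ∀ i : Fin k, (A ∪ B).sup' hAB (fun a => a i) = max (M i A) (M i B) := by
      intro i
      rw [Finset.sup'_union hA hB, hM]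
      simp only [dif_pos hA, dif_pos hB]
    have h2 : (A ∪ B).inf' hAB (fun a => ∑ i : Fin k, a i) = min (N A) (N B) := by
      rw [Finset.inf'_union hA hB, hN]
      simp only [dif_pos hA, dif_pos hB]
    simp only [Finset.sum_congr rfl (fun i _ => h1 i), h2]
    rw [← Finset.mul_sum]
    ring
  rw [Finset.sum_congr rfl (fun A _ => Finset.sum_congr rfl (fun B _ => key A B))]
  simp only [Finset.sum_sub_distrib]
  have swap : ∑ A ∈ P, ∑ B ∈ P, (∑ i : Fin k, x A * x B * max (M i A) (M i B))
      = ∑ i : Fin k, ∑ A ∈ P, ∑ B ∈ P, x A * x B * max (M i A) (M i B) := by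
    rw [Finset.sum_congr rfl (fun A _ => Finset.sum_comm)]
    exact Finset.sum_comm
  rw [swap]
  have h1 : ∑ i : Fin k, ∑ A ∈ P, ∑ B ∈ P, x A * x B * max (M i A) (M i B) ≤ 0 := by
    refine Finset.sum_nonpos fun i _ => ?_
    exact maxKernel_nonpos P x (M i) hxsum
  have h2 : 0 ≤ ∑ A ∈ P, ∑ B ∈ P, x A * x B * min (N A) (N B) :=
    minKernel_nonneg' P x N hxsum
  linarith
end

section
/- Let (X, δ) be a finite diversity of negative type with |X| = n. Then there is a map φ : X → ℝ^k with k = 2^n − 1 such that for every nonempty A ⊆ X one has δ(A) = δ_neg(φ(A)), i.e. (X, δ) embeds isometrically into (ℝ^k, δ_neg). -/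
open Finset

attribute [local instance] Classical.propDecidable

section Helpers

variable {X : Type*} [Fintype X] [DecidableEq X]

/-- Double Möbius-type identity. -/
lemma lemD (U : Finset X) :
    ∀ h : Finset X → ℝ,
      ∑ S ∈ U.powerset, ∑ T ∈ U.powerset, (-1 : ℝ) ^ (S.card + T.card) * h (S ∩ T)
        = (-1 : ℝ) ^ U.card * ∑ R ∈ U.powerset, (-1 : ℝ) ^ R.card * h R := by
  induction U using Finset.induction_on with
  | empty => intro h; simp
  | insert _ _ ha ih =>
    rename_i a U
    intro h
    simp only [Finset.sum_powerset_insert ha]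
    have key : ∀ S ∈ U.powerset, ∀ T ∈ U.powerset,
        ((-1 : ℝ) ^ (S.card + T.card) * h (S ∩ T)
          + (-1 : ℝ) ^ (S.card + (insert a T).card) * h (S ∩ insert a T))
        + ((-1 : ℝ) ^ ((insert a S).card + T.card) * h (insert a S ∩ T)
          + (-1 : ℝ) ^ ((insert a S).card + (insert a T).card) * h (insert a S ∩ insert a T))
        = (-1 : ℝ) ^ (S.card + T.card) * ((h (insert a (S ∩ T)) - h (S ∩ T))) := by
      intro S hS T hT
      rw [mem_powerset] at hS hT
      have haS : a ∉ S := fun h' => ha (hS h')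
      have haT : a ∉ T := fun h' => ha (hT h')
      rw [card_insert_of_notMem haS, card_insert_of_notMem haT,
        Finset.inter_insert_of_notMem haS, Finset.insert_inter_of_notMem haT,
        ← Finset.insert_inter_distrib]
      ring
    simp only [← Finset.sum_add_distrib]
    have hmid : ∑ S ∈ U.powerset, ∑ T ∈ U.powerset,
        (((-1 : ℝ) ^ (S.card + T.card) * h (S ∩ T)
          + (-1 : ℝ) ^ (S.card + (insert a T).card) * h (S ∩ insert a T))
        + ((-1 : ℝ) ^ ((insert a S).card + T.card) * h (insert a S ∩ T)
          + (-1 : ℝ) ^ ((insert a S).card + (insert a T).card) * h (insert a S ∩ insert a T)))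
        = ∑ S ∈ U.powerset, ∑ T ∈ U.powerset,
            (-1 : ℝ) ^ (S.card + T.card) * ((h (insert a (S ∩ T)) - h (S ∩ T))) :=
      Finset.sum_congr rfl (fun S hS => Finset.sum_congr rfl (fun T hT => key S hS T hT))
    rw [hmid, ih (fun R => h (insert a R) - h R)]
    rw [card_insert_of_notMem ha, Finset.mul_sum, Finset.mul_sum]
    apply Finset.sum_congr rfl
    intro R hR
    rw [mem_powerset] at hR
    have haR : a ∉ R := fun h' => ha (hR h')
    rw [card_insert_of_notMem haR]
    ring

/-- Möbius inversion identity. -/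
lemma lemE (W : Finset X) :
    ∀ f : Finset X → ℝ,
      ∑ U ∈ W.powerset, ∑ S ∈ U.powerset, (-1 : ℝ) ^ (U.card + S.card) * f S = f W := by
  induction W using Finset.induction_on with
  | empty => intro f; simp
  | insert _ _ ha ih =>
    rename_i a W
    intro f
    rw [Finset.sum_powerset_insert ha]
    have expand : ∀ U ∈ W.powerset,
        ∑ S ∈ (insert a U).powerset, (-1 : ℝ) ^ ((insert a U).card + S.card) * f S
          = -(∑ S ∈ U.powerset, (-1 : ℝ) ^ (U.card + S.card) * f S)
            + ∑ S ∈ U.powerset, (-1 : ℝ) ^ (U.card + S.card) * f (insert a S) := by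
      intro U hU
      rw [mem_powerset] at hU
      have haU : a ∉ U := fun h' => ha (hU h')
      rw [Finset.sum_powerset_insert haU, card_insert_of_notMem haU]
      have e1 : ∑ S ∈ U.powerset, (-1 : ℝ) ^ (U.card + 1 + S.card) * f S
          = ∑ S ∈ U.powerset, -((-1 : ℝ) ^ (U.card + S.card) * f S) :=
        Finset.sum_congr rfl (fun S _ => by ring)
      have e2 : ∑ S ∈ U.powerset, (-1 : ℝ) ^ (U.card + 1 + (insert a S).card) * f (insert a S)
          = ∑ S ∈ U.powerset, (-1 : ℝ) ^ (U.card + S.card) * f (insert a S) := by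
        apply Finset.sum_congr rfl
        intro S hS
        rw [mem_powerset] at hS
        have haS : a ∉ S := fun h' => haU (hS h')
        rw [card_insert_of_notMem haS]
        ring
      rw [e1, e2, Finset.sum_neg_distrib]
    rw [Finset.sum_congr rfl expand, Finset.sum_add_distrib, Finset.sum_neg_distrib]
    rw [ih (fun S => f (insert a S))]
    ring

end Helpers

/-- Every finite negative type diversity on `n` points embeds
isometrically into `(ℝ^k, δ_neg)` with `k = 2^n - 1`. -/
theorem stmt15 {X : Type*} [Fintype X] [DecidableEq X] (n : ℕ)
    (hn : Fintype.card X = n) (δ : Finset X → ℝ)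
    (h1 : ∀ A : Finset X, 0 ≤ δ A)
    (h2 : ∀ A : Finset X, δ A = 0 ↔ A.card ≤ 1)
    (h3 : ∀ A B C : Finset X, B.Nonempty → δ (A ∪ C) ≤ δ (A ∪ B) + δ (B ∪ C))
    (hneg : ∀ x : Finset X → ℝ, x ∅ = 0 → (∑ A : Finset X, x A) = 0 →
      ∑ A : Finset X, ∑ B : Finset X, x A * x B * δ (A ∪ B) ≤ 0) :
    ∃ φ : X → (Fin (2 ^ n - 1) → ℝ), ∀ A : Finset X, A.Nonempty →
      δ A = deltaNeg (A.image φ) := by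
  classical
  have hδ0 : δ ∅ = 0 := (h2 ∅).mpr (by simp)
  have hδ1 : ∀ a : X, δ {a} = 0 := fun a => (h2 {a}).mpr (by simp)
  -- the coefficients
  set c : Finset X → ℝ :=
    fun U => ∑ S ∈ U.powerset, (-1 : ℝ) ^ (U.card + S.card + 1) * δ Sᶜ with hc
  -- Lemma A : partial sums of c
  have lemA : ∀ W : Finset X, ∑ U ∈ W.powerset, c U = -δ Wᶜ := by
    intro W
    have := lemE W (fun S => -δ Sᶜ)
    rw [← this]
    apply Finset.sum_congr rfl
    intro U _
    rw [hc]
    apply Finset.sum_congr rfl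
    intro S _
    ring
  -- Lemma B : the representation of δ
  have lemB : ∀ A : Finset X,
      ∑ U : Finset X, (if (U ∩ A).Nonempty then c U else 0) = δ A := by
    intro A
    have split : ∀ U : Finset X,
        (if (U ∩ A).Nonempty then c U else 0)
          = c U - (if U ⊆ Aᶜ then c U else 0) := by
      intro U
      have : (U ∩ A).Nonempty ↔ ¬ U ⊆ Aᶜ := by
        rw [Finset.nonempty_iff_ne_empty]
        constructor
        · intro hne hsub
          apply hne
          apply Finset.eq_empty_of_forall_notMem
          intro x hx
          rw [Finset.mem_inter] at hx
          exact (Finset.mem_compl.mp (hsub hx.1)) hx.2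
        · intro hns
          intro he
          apply hns
          intro x hx
          rw [Finset.mem_compl]
          intro hxA
          exact (Finset.eq_empty_iff_forall_notMem.mp he x)
            (Finset.mem_inter.mpr ⟨hx, hxA⟩)
      by_cases hP : (U ∩ A).Nonempty
      · rw [if_pos hP, if_neg (by rw [this] at hP; exact hP)]; ring
      · rw [if_neg hP, if_pos (by rw [this] at hP; exact not_not.mp hP)]; ring
    rw [Finset.sum_congr rfl (fun U _ => split U), Finset.sum_sub_distrib]
    have e1 : ∑ U : Finset X, c U = 0 := by
      rw [← Finset.powerset_univ, lemA, Finset.compl_univ, hδ0, neg_zero]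
    have e2 : ∑ U : Finset X, (if U ⊆ Aᶜ then c U else 0) = -δ A := by
      have : ∀ U : Finset X, (if U ⊆ Aᶜ then c U else 0)
          = (if U ∈ Aᶜ.powerset then c U else 0) := by
        intro U; simp [Finset.mem_powerset]
      rw [Finset.sum_congr rfl (fun U _ => this U), Fintype.sum_ite_mem, lemA,
        compl_compl]
    rw [e1, e2]; ring
  -- Lemma C : nonnegativity of coefficients
  have lemC : ∀ U : Finset X, U.Nonempty → U ≠ Finset.univ → 0 ≤ c U := by
    intro U hUne hUuniv
    set x : Finset X → ℝ :=
      fun A => if Aᶜ ⊆ U then (-1 : ℝ) ^ (U.card + Aᶜ.card + 1) else 0 with hx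
    have hcompl : Function.Bijective (fun S : Finset X => Sᶜ) :=
      Function.Involutive.bijective (fun S => compl_compl S)
    have hx0 : x ∅ = 0 := by
      rw [hx]
      simp only [Finset.compl_empty]
      rw [if_neg]
      intro hsub
      exact hUuniv (Finset.univ_subset_iff.mp hsub)
    have hsum0 : ∑ S ∈ U.powerset, (-1 : ℝ) ^ S.card = 0 := by
      have h := Finset.sum_powerset_neg_one_pow_card_of_nonempty hUne
      exact_mod_cast h
    have hxsum : (∑ A : Finset X, x A) = 0 := by
      rw [← Fintype.sum_bijective _ hcompl (fun S => x Sᶜ) x (fun S => rfl)]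
      have : ∀ S : Finset X, x Sᶜ
          = (if S ∈ U.powerset then (-1 : ℝ) ^ (U.card + S.card + 1) else 0) := by
        intro S
        rw [hx]
        simp [compl_compl, Finset.mem_powerset]
      rw [Finset.sum_congr rfl (fun S _ => this S), Fintype.sum_ite_mem]
      have : ∀ S ∈ U.powerset, (-1 : ℝ) ^ (U.card + S.card + 1)
          = ((-1 : ℝ) ^ (U.card + 1)) * (-1 : ℝ) ^ S.card := by
        intro S _; ring
      rw [Finset.sum_congr rfl this, ← Finset.mul_sum, hsum0, mul_zero]
    have hQ := hneg x hx0 hxsum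
    -- rewrite the quadratic form
    have hQeq : ∑ A : Finset X, ∑ B : Finset X, x A * x B * δ (A ∪ B) = -c U := by
      rw [← Fintype.sum_bijective _ hcompl
        (fun S => ∑ B : Finset X, x Sᶜ * x B * δ (Sᶜ ∪ B))
        (fun A => ∑ B : Finset X, x A * x B * δ (A ∪ B)) (fun S => rfl)]
      have inner : ∀ S : Finset X,
          ∑ B : Finset X, x Sᶜ * x B * δ (Sᶜ ∪ B)
            = ∑ T : Finset X, x Sᶜ * x Tᶜ * δ (S ∩ T)ᶜ := by
        intro S
        rw [← Fintype.sum_bijective _ hcompl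
          (fun T => x Sᶜ * x Tᶜ * δ (Sᶜ ∪ Tᶜ))
          (fun B => x Sᶜ * x B * δ (Sᶜ ∪ B)) (fun T => rfl)]
        apply Fintype.sum_congr
        intro T
        rw [Finset.compl_inter]
      rw [Fintype.sum_congr _ _ inner]
      have term : ∀ S T : Finset X, x Sᶜ * x Tᶜ * δ (S ∩ T)ᶜ
          = (if S ∈ U.powerset then
              (if T ∈ U.powerset then (-1 : ℝ) ^ (S.card + T.card) * δ (S ∩ T)ᶜ else 0)
            else 0) := by
        intro S T
        rw [hx]
        simp only [compl_compl, Finset.mem_powerset]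
        by_cases hS : S ⊆ U
        · by_cases hT : T ⊆ U
          · rw [if_pos hS, if_pos hT, if_pos hS, if_pos hT]
            have : (-1 : ℝ) ^ (U.card + S.card + 1) * (-1 : ℝ) ^ (U.card + T.card + 1)
                = (-1 : ℝ) ^ (S.card + T.card) := by
              rw [← pow_add]
              have : U.card + S.card + 1 + (U.card + T.card + 1)
                  = S.card + T.card + 2 * (U.card + 1) := by ring
              rw [this, pow_add, pow_mul]
              norm_num
            rw [this]
          · rw [if_pos hS, if_neg hT, if_pos hS, if_neg hT]; ring
        · rw [if_neg hS, if_neg hS]; ring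
      rw [Fintype.sum_congr _ _ (fun S => Fintype.sum_congr _ _ (fun T => term S T))]
      have outer : ∀ S : Finset X,
          (∑ T : Finset X, if S ∈ U.powerset then
              (if T ∈ U.powerset then (-1 : ℝ) ^ (S.card + T.card) * δ (S ∩ T)ᶜ else 0)
            else 0)
          = (if S ∈ U.powerset then
              ∑ T ∈ U.powerset, (-1 : ℝ) ^ (S.card + T.card) * δ (S ∩ T)ᶜ else 0) := by
        intro S
        by_cases hS : S ∈ U.powerset
        · simp only [if_pos hS, Fintype.sum_ite_mem]
        · simp only [if_neg hS, Finset.sum_const_zero]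
      rw [Fintype.sum_congr _ _ outer, Fintype.sum_ite_mem]
      rw [lemD U (fun R => δ Rᶜ), hc]
      rw [Finset.mul_sum, ← Finset.sum_neg_distrib]
      apply Finset.sum_congr rfl
      intro R _
      ring
    rw [hQeq] at hQ
    linarith
  -- the sum over all nonempty U of c U times membership indicator, for singletons
  have lemS : ∀ a : X, ∑ U : Finset X, (if a ∈ U then c U else 0) = 0 := by
    intro a
    have : ∀ U : Finset X, (if a ∈ U then c U else 0)
        = (if (U ∩ {a}).Nonempty then c U else 0) := by
      intro U
      by_cases hmem : a ∈ U
      · rw [if_pos hmem,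
          if_pos ⟨a, Finset.mem_inter.mpr ⟨hmem, Finset.mem_singleton_self a⟩⟩]
      · rw [if_neg hmem, if_neg]
        rintro ⟨x, hx⟩
        rw [Finset.mem_inter, Finset.mem_singleton] at hx
        exact hmem (hx.2 ▸ hx.1)
    rw [Finset.sum_congr rfl (fun U _ => this U), lemB {a}, hδ1]
  -- cardinality of the index type
  have hcard : Fintype.card {U : Finset X // U.Nonempty} = 2 ^ n - 1 := by
    rw [Fintype.card_subtype]
    have hfilter : Finset.univ.filter (fun U : Finset X => ¬ U.Nonempty) = {∅} := by
      ext U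
      simp [Finset.not_nonempty_iff_eq_empty]
    have htotal := Finset.card_filter_add_card_filter_not
      (s := (Finset.univ : Finset (Finset X))) (p := fun U : Finset X => U.Nonempty)
    rw [hfilter, Finset.card_singleton] at htotal
    have huniv : (Finset.univ : Finset (Finset X)).card = 2 ^ n := by
      rw [Finset.card_univ, Fintype.card_finset, hn]
    omega
  set E : {U : Finset X // U.Nonempty} ≃ Fin (2 ^ n - 1) :=
    Fintype.equivFinOfCardEq hcard with hE
  refine ⟨fun x i => if x ∈ (E.symm i).1 then c (E.symm i).1 else 0, ?_⟩
  intro A hA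
  set φ : X → (Fin (2 ^ n - 1) → ℝ) :=
    fun x i => if x ∈ (E.symm i).1 then c (E.symm i).1 else 0 with hφ
  have himg : (A.image φ).Nonempty := hA.image φ
  rw [deltaNeg, dif_pos himg]
  -- subtype sums to full sums
  have subsum : ∀ g : Finset X → ℝ, g ∅ = 0 →
      ∑ i : Fin (2 ^ n - 1), g (E.symm i).1 = ∑ U : Finset X, g U := by
    intro g hg
    rw [Equiv.sum_comp E.symm (fun u : {U : Finset X // U.Nonempty} => g u.1)]
    rw [← Finset.sum_subtype (Finset.univ.filter (fun U : Finset X => U.Nonempty))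
      (fun U => by simp) g]
    apply Finset.sum_subset (Finset.filter_subset _ _)
    intro U _ hU
    have : U = ∅ := by
      by_contra hne
      exact hU (Finset.mem_filter.mpr ⟨Finset.mem_univ U,
        Finset.nonempty_iff_ne_empty.mpr hne⟩)
    rw [this, hg]
  -- the sup' in each coordinate
  have hsup : ∀ i : Fin (2 ^ n - 1),
      (A.image φ).sup' himg (fun a => a i)
        = (if ((E.symm i).1 ∩ A).Nonempty then c (E.symm i).1 else 0) := by
    intro i
    rw [Finset.sup'_image himg (fun a => a i)]
    set U : Finset X := (E.symm i).1 with hU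
    by_cases hint : (U ∩ A).Nonempty
    · rw [if_pos hint]
      obtain ⟨a0, ha0⟩ := hint
      rw [Finset.mem_inter] at ha0
      apply le_antisymm
      · apply Finset.sup'_le
        intro x hx
        show (if x ∈ U then c U else 0) ≤ c U
        by_cases hxU : x ∈ U
        · rw [if_pos hxU]
        · rw [if_neg hxU]
          have hUuniv : U ≠ Finset.univ := by
            intro h
            exact hxU (h ▸ Finset.mem_univ x)
          exact lemC U (E.symm i).2 hUuniv
      · have := Finset.le_sup' (fun x => (φ x i)) ha0.2
        calc c U = φ a0 i := by rw [hφ]; simp only [← hU]; rw [if_pos ha0.1]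
        _ ≤ _ := this
    · rw [if_neg hint]
      obtain ⟨a0, ha0⟩ := hA
      apply le_antisymm
      · apply Finset.sup'_le
        intro x hx
        show (if x ∈ U then c U else 0) ≤ 0
        rw [if_neg]
        intro hxU
        exact hint ⟨x, Finset.mem_inter.mpr ⟨hxU, hx⟩⟩
      · have := Finset.le_sup' (fun x => (φ x i)) ha0
        have hz : φ a0 i = 0 := by
          rw [hφ]
          simp only [← hU]
          rw [if_neg]
          intro hxU
          exact hint ⟨a0, Finset.mem_inter.mpr ⟨hxU, ha0⟩⟩
        calc (0 : ℝ) = φ a0 i := hz.symm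
        _ ≤ _ := this
  -- sum of sup's equals δ A
  have hsupsum : ∑ i : Fin (2 ^ n - 1), (A.image φ).sup' himg (fun a => a i) = δ A := by
    rw [Fintype.sum_congr _ _ hsup]
    rw [subsum (fun U => if (U ∩ A).Nonempty then c U else 0) (by simp)]
    exact lemB A
  -- each point has coordinate-sum zero
  have hptsum : ∀ a : X, a ∈ A → (∑ i : Fin (2 ^ n - 1), φ a i) = 0 := by
    intro a _
    have : ∀ i : Fin (2 ^ n - 1), φ a i
        = (fun U : Finset X => if a ∈ U then c U else 0) (E.symm i).1 := by
      intro i; rfl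
    rw [Fintype.sum_congr _ _ this]
    rw [subsum (fun U => if a ∈ U then c U else 0) (by simp)]
    exact lemS a
  have hinf : (A.image φ).inf' himg (fun a => ∑ i : Fin (2 ^ n - 1), a i) = 0 := by
    rw [Finset.inf'_image himg (fun a => ∑ i : Fin (2 ^ n - 1), a i)]
    have heq : A.inf' himg.of_image ((fun a => ∑ i : Fin (2 ^ n - 1), a i) ∘ φ)
        = A.inf' himg.of_image (fun _ => (0 : ℝ)) :=
      Finset.inf'_congr himg.of_image rfl (fun x hx => hptsum x hx)
    rw [heq, Finset.inf'_const]
  rw [hsupsum, hinf, sub_zero]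
end

section
/- For m > 2 let 𝒳 be the collection of all m-element subsets of [2m] = {1, …, 2m} and define δ_H on subsets of 𝒳 by δ_H(𝒜) = |⋃_{A ∈ 𝒜} A| − m for nonempty 𝒜 and δ_H(∅) = 0. Then (𝒳, δ_H) is a diversity of negative type. -/
open Finset

set_option maxHeartbeats 1000000 in
/-- For `m > 2`, let `𝒳` be the collection of all `m`-element subsets
of `[2m]` and `δ_H(𝒜) = |⋃_{A ∈ 𝒜} A| − m` for nonempty `𝒜` (and `δ_H(∅) = 0`). Then
`(𝒳, δ_H)` is a diversity of negative type. -/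
theorem stmt17 (m : ℕ) (hm : 2 < m)
    (δ : Finset {A : Finset (Fin (2 * m)) // A.card = m} → ℝ)
    (hδ : ∀ 𝒜 : Finset {A : Finset (Fin (2 * m)) // A.card = m},
      δ 𝒜 = if 𝒜.Nonempty then ((𝒜.sup (fun A => A.1)).card : ℝ) - m else 0) :
    ((∀ 𝒜 : Finset {A : Finset (Fin (2 * m)) // A.card = m}, 0 ≤ δ 𝒜) ∧
     (∀ 𝒜 : Finset {A : Finset (Fin (2 * m)) // A.card = m}, δ 𝒜 = 0 ↔ 𝒜.card ≤ 1) ∧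
     (∀ 𝒜 ℬ 𝒞 : Finset {A : Finset (Fin (2 * m)) // A.card = m}, ℬ.Nonempty →
        δ (𝒜 ∪ 𝒞) ≤ δ (𝒜 ∪ ℬ) + δ (ℬ ∪ 𝒞))) ∧
    (∀ x : Finset {A : Finset (Fin (2 * m)) // A.card = m} → ℝ, x ∅ = 0 →
      (∑ 𝒜 : Finset {A : Finset (Fin (2 * m)) // A.card = m}, x 𝒜) = 0 →
      ∑ 𝒜 : Finset {A : Finset (Fin (2 * m)) // A.card = m},
        ∑ ℬ : Finset {A : Finset (Fin (2 * m)) // A.card = m},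
          x 𝒜 * x ℬ * δ (𝒜 ∪ ℬ) ≤ 0) := by
  have hsup : ∀ 𝒜 : Finset {A : Finset (Fin (2 * m)) // A.card = m}, 𝒜.Nonempty →
      m ≤ (𝒜.sup (fun A => A.1)).card := by
    rintro 𝒜 ⟨A, hA⟩
    calc m = A.1.card := A.2.symm
    _ ≤ _ := card_le_card (le_sup hA)
  have hnonneg : ∀ 𝒜, 0 ≤ δ 𝒜 := by
    intro 𝒜
    rw [hδ]
    split
    · next h =>
      have := hsup 𝒜 h
      have : (m : ℝ) ≤ ((𝒜.sup (fun A => A.1)).card : ℝ) := by exact_mod_cast this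
      linarith
    · exact le_refl _
  have hzero : ∀ 𝒜, δ 𝒜 = 0 ↔ 𝒜.card ≤ 1 := by
    intro 𝒜
    rw [hδ]
    by_cases h : 𝒜.Nonempty
    · simp only [h, if_true]
      constructor
      · intro he
        have hcard : (𝒜.sup (fun A => A.1)).card = m := by
          have := sub_eq_zero.mp he
          exact_mod_cast this
        rw [Finset.card_le_one]
        intro a ha b hb
        have ha' : a.1 = 𝒜.sup (fun A => A.1) :=
          Finset.eq_of_subset_of_card_le (le_sup ha) (by rw [hcard, a.2])
        have hb' : b.1 = 𝒜.sup (fun A => A.1) :=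
          Finset.eq_of_subset_of_card_le (le_sup hb) (by rw [hcard, b.2])
        exact Subtype.ext (ha'.trans hb'.symm)
      · intro hc
        obtain ⟨A, hA⟩ := h
        have h1 : 𝒜 = {A} :=
          Finset.eq_singleton_iff_unique_mem.mpr
            ⟨hA, fun b hb => Finset.card_le_one.mp hc b hb A hA⟩
        rw [h1]
        simp [A.2]
    · simp only [h, if_false]
      rw [Finset.not_nonempty_iff_eq_empty] at h
      simp [h]
  have htri : ∀ 𝒜 ℬ 𝒞 : Finset {A : Finset (Fin (2 * m)) // A.card = m}, ℬ.Nonempty →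
      δ (𝒜 ∪ 𝒞) ≤ δ (𝒜 ∪ ℬ) + δ (ℬ ∪ 𝒞) := by
    intro 𝒜 ℬ 𝒞 hB
    by_cases hAC : (𝒜 ∪ 𝒞).Nonempty
    · rw [hδ (𝒜 ∪ 𝒞), hδ (𝒜 ∪ ℬ), hδ (ℬ ∪ 𝒞), if_pos hAC,
        if_pos (Finset.Nonempty.mono Finset.subset_union_right hB), if_pos (Finset.Nonempty.mono Finset.subset_union_left hB)]
      rw [sup_union, sup_union, sup_union]
      set S := 𝒜.sup (fun A => A.1) with hS
      set T := ℬ.sup (fun A => A.1) with hT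
      set U := 𝒞.sup (fun A => A.1) with hU
      have key : (S ⊔ U).card + m ≤ (S ⊔ T).card + (T ⊔ U).card := by
        have h1 : (S ⊔ U).card ≤ ((S ⊔ T) ∪ (T ⊔ U)).card := by
          apply card_le_card
          intro i hi
          simp only [Finset.sup_eq_union, Finset.mem_union] at hi ⊢
          tauto
        have h2 : m ≤ ((S ⊔ T) ∩ (T ⊔ U)).card := by
          refine (hsup ℬ hB).trans (card_le_card ?_)
          intro i hi
          simp only [Finset.sup_eq_union, Finset.mem_inter, Finset.mem_union]
          exact ⟨Or.inr hi, Or.inl hi⟩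
        have h3 := Finset.card_union_add_card_inter (S ⊔ T) (T ⊔ U)
        omega
      have key' : ((S ⊔ U).card : ℝ) + m ≤ ((S ⊔ T).card : ℝ) + ((T ⊔ U).card : ℝ) := by
        exact_mod_cast key
      linarith
    · rw [hδ (𝒜 ∪ 𝒞), if_neg hAC]
      exact add_nonneg (hnonneg _) (hnonneg _)
  refine ⟨⟨hnonneg, hzero, htri⟩, ?_⟩
  intro x hx0 hxsum
  set f : Finset {A : Finset (Fin (2 * m)) // A.card = m} → Fin (2 * m) → ℝ :=
    fun 𝒜 i => if i ∈ 𝒜.sup (fun A => A.1) then 0 else 1 with hf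
  have hterm : ∀ 𝒜 ℬ : Finset {A : Finset (Fin (2 * m)) // A.card = m},
      x 𝒜 * x ℬ * δ (𝒜 ∪ ℬ) = x 𝒜 * x ℬ * ((m : ℝ) - ∑ i, f 𝒜 i * f ℬ i) := by
    intro 𝒜 ℬ
    by_cases hA : 𝒜 = ∅
    · simp [hA, hx0]
    by_cases hB : ℬ = ∅
    · simp [hB, hx0]
    congr 1
    rw [hδ, if_pos (Finset.Nonempty.mono Finset.subset_union_left (nonempty_iff_ne_empty.mpr hA)), sup_union]
    set W := 𝒜.sup (fun A => A.1) ⊔ ℬ.sup (fun A => A.1) with hW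
    have hWcard : W.card ≤ 2 * m := by
      calc W.card ≤ (Finset.univ : Finset (Fin (2 * m))).card := card_le_card (subset_univ _)
      _ = 2 * m := by simp
    have hcount : ∑ i, f 𝒜 i * f ℬ i = (Wᶜ.card : ℝ) := by
      have heach : ∀ i, f 𝒜 i * f ℬ i = if i ∈ W then (0 : ℝ) else 1 := by
        intro i
        simp only [hf, hW, Finset.sup_eq_union, Finset.mem_union]
        by_cases h1 : i ∈ 𝒜.sup (fun A => A.1) <;>
          by_cases h2 : i ∈ ℬ.sup (fun A => A.1) <;> simp [h1, h2]
      rw [Finset.sum_congr rfl (fun i _ => heach i)]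
      rw [Finset.sum_ite, Finset.sum_const, Finset.sum_const]
      simp [Finset.filter_not, Finset.compl_eq_univ_sdiff]
    rw [hcount, Finset.card_compl]
    rw [Fintype.card_fin, Nat.cast_sub hWcard]
    push_cast
    ring
  calc ∑ 𝒜, ∑ ℬ, x 𝒜 * x ℬ * δ (𝒜 ∪ ℬ)
      = ∑ 𝒜, ∑ ℬ, (x 𝒜 * x ℬ * (m : ℝ) - ∑ i, (x 𝒜 * f 𝒜 i) * (x ℬ * f ℬ i)) := by
        refine Finset.sum_congr rfl fun 𝒜 _ => Finset.sum_congr rfl fun ℬ _ => ?_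
        rw [hterm, mul_sub]
        congr 1
        rw [Finset.mul_sum]
        exact Finset.sum_congr rfl fun i _ => by ring
    _ = (∑ 𝒜, ∑ ℬ, x 𝒜 * x ℬ * (m : ℝ))
        - ∑ 𝒜, ∑ ℬ, ∑ i, (x 𝒜 * f 𝒜 i) * (x ℬ * f ℬ i) := by
        rw [← Finset.sum_sub_distrib]
        exact Finset.sum_congr rfl fun 𝒜 _ => Finset.sum_sub_distrib _ _
    _ = 0 - ∑ i, (∑ 𝒜, x 𝒜 * f 𝒜 i) ^ 2 := by
        congr 1
        · have h1 : ∀ 𝒜 : Finset {A : Finset (Fin (2 * m)) // A.card = m},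
              ∑ ℬ, x 𝒜 * x ℬ * (m : ℝ) = x 𝒜 * (m : ℝ) * ∑ ℬ, x ℬ := by
            intro 𝒜
            rw [Finset.mul_sum]
            exact Finset.sum_congr rfl fun ℬ _ => by ring
          simp_rw [h1, hxsum, mul_zero, Finset.sum_const_zero]
        · have h2 : ∀ 𝒜 : Finset {A : Finset (Fin (2 * m)) // A.card = m},
              ∑ ℬ, ∑ i, (x 𝒜 * f 𝒜 i) * (x ℬ * f ℬ i)
              = ∑ i, (x 𝒜 * f 𝒜 i) * (∑ ℬ, x ℬ * f ℬ i) := by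
            intro 𝒜
            rw [Finset.sum_comm]
            exact Finset.sum_congr rfl fun i _ => (Finset.mul_sum _ _ _).symm
          simp_rw [h2]
          rw [Finset.sum_comm]
          refine Finset.sum_congr rfl fun i _ => ?_
          rw [← Finset.sum_mul, sq]
    _ ≤ 0 := by
        rw [zero_sub, neg_nonpos]
        exact Finset.sum_nonneg fun i _ => sq_nonneg _
end
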